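/- arXiv:2005.06871 — 5 statements merged into one kernel-verified Lean document; each statement's English description precedes it below -/
import Mathlib

section
/- Let T > 0, let V : [0,T] → ℝ be continuous, strictly increasing, and continuously differentiable on (0,T), and let g : ℝ → ℝ be continuous with |g(y)| ≤ c·exp(λy²) for all y ∈ ℝ, where c > 0 and 0 < λ < (2(V(T) − V(0)))⁻¹. Define u(t,x) = ∫_ℝ p_{V(T)−V(t)}(x−y) g(y) dy for 0 ≤ t < T and x ∈ ℝ. Then u is once continuously differentiable in t and twice continuously differentiable in x on (0,T) × ℝ, it satisfies the backward heat-type equation ∂u/∂t(t,x) + (1/2)·V′(t)·∂²u/∂x²(t,x) = 0 for all (t,x) ∈ (0,T) × ℝ, and for every x ∈ ℝ, u(t,x) → g(x) as t → T⁻. -/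
open MeasureTheory Set Filter

/-- The centered Gaussian heat kernel of variance `v`. -/
noncomputable def heatKernel (v x : ℝ) : ℝ :=
  (Real.sqrt (2 * Real.pi * v))⁻¹ * Real.exp (-(x ^ 2) / (2 * v))

namespace Stmt0Aux
open Real

noncomputable def hk1 (v z : ℝ) : ℝ := (-z / v) * heatKernel v z
noncomputable def hk2 (v z : ℝ) : ℝ := (z ^ 2 / v ^ 2 - 1 / v) * heatKernel v z

lemma hk_nonneg (v z : ℝ) : 0 ≤ heatKernel v z :=
  mul_nonneg (inv_nonneg.2 (Real.sqrt_nonneg _)) (Real.exp_pos _).le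

lemma continuous_hk (v : ℝ) : Continuous fun z => heatKernel v z := by
  unfold heatKernel; fun_prop

lemma continuous_hk1 (v : ℝ) : Continuous fun z => hk1 v z := by
  unfold hk1 heatKernel; fun_prop

lemma continuous_hk2 (v : ℝ) : Continuous fun z => hk2 v z := by
  unfold hk2 heatKernel; fun_prop

lemma hk_eq_exp {v : ℝ} (hv : 0 < v) (z : ℝ) :
    heatKernel v z = Real.exp (-(Real.log (2 * Real.pi * v)) / 2 + -(z ^ 2) / (2 * v)) := by
  have h2 : 0 < 2 * Real.pi * v := by positivity
  rw [Real.exp_add, heatKernel]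
  congr 1
  rw [← Real.exp_log (Real.sqrt_pos.2 h2), Real.log_sqrt h2.le, ← Real.exp_neg]
  congr 1
  ring

lemma hasDerivAt_hk_x (v : ℝ) (y x : ℝ) :
    HasDerivAt (fun x => heatKernel v (x - y)) (hk1 v (x - y)) x := by
  rcases eq_or_ne v 0 with rfl | hv
  · simp only [heatKernel, hk1, mul_zero, Real.sqrt_zero, inv_zero, zero_mul, mul_zero, div_zero]
    simpa using hasDerivAt_const x (0:ℝ)
  · have h1 : HasDerivAt (fun x : ℝ => -((x - y) ^ 2) / (2 * v)) (-(x - y) / v) x := by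
      have := (((hasDerivAt_id x).sub_const y).pow 2).neg.div_const (2*v)
      refine this.congr_deriv ?_
      field_simp
      simp only [id_eq]; ring
    have := (h1.exp).const_mul (Real.sqrt (2*Real.pi*v))⁻¹
    simp only [heatKernel, hk1]
    refine this.congr_deriv ?_
    ring

lemma hasDerivAt_hk1_x (v : ℝ) (hv : v ≠ 0) (y x : ℝ) :
    HasDerivAt (fun x => hk1 v (x - y)) (hk2 v (x - y)) x := by
  have h1 : HasDerivAt (fun x : ℝ => -(x - y) / v) (-1 / v) x := by
    simpa using (((hasDerivAt_id x).sub_const y).neg.div_const v)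
  have h2 := (h1.mul (hasDerivAt_hk_x v y x))
  simp only [hk1, hk2] at h2 ⊢
  refine h2.congr_deriv ?_
  field_simp
  ring

lemma hasDerivAt_hk_v {v : ℝ} (hv : 0 < v) (z : ℝ) :
    HasDerivAt (fun v => heatKernel v z) ((1/2) * hk2 v z) v := by
  have h2 : 0 < 2 * Real.pi * v := by positivity
  have hlog : HasDerivAt (fun v : ℝ => -(Real.log (2 * Real.pi * v)) / 2 + -(z ^ 2) / (2 * v))
      (-(1/v)/2 + (z^2/(2*v^2))) v := by
    have ha : HasDerivAt (fun v : ℝ => 2 * Real.pi * v) (2 * Real.pi) v := by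
      simpa using (hasDerivAt_id v).const_mul (2 * Real.pi)
    have hl : HasDerivAt (fun v : ℝ => Real.log (2 * Real.pi * v)) (2 * Real.pi / (2 * Real.pi * v)) v :=
      ha.log h2.ne'
    have hl2 := (hl.neg.div_const 2)
    have hinv : HasDerivAt (fun v : ℝ => -(z ^ 2) / (2 * v)) (z^2/(2*v^2)) v := by
      have h : HasDerivAt (fun v : ℝ => -(z^2)/2 * v⁻¹) (-(z^2)/2 * -(v^2)⁻¹) v :=
        (hasDerivAt_inv hv.ne').const_mul _
      have heqf : (fun v : ℝ => -(z ^ 2) / (2 * v)) = fun v : ℝ => -(z^2)/2 * v⁻¹ := by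
        funext w; ring
      rw [heqf, show z^2/(2*v^2) = -(z^2)/2 * -(v^2)⁻¹ by ring]
      exact h
    have := hl2.add hinv
    refine this.congr_deriv ?_
    have hpi : (2 * Real.pi) ≠ 0 := by positivity
    field_simp
  have := hlog.exp
  have heq : (fun v => heatKernel v z) =ᶠ[nhds v]
      (fun v => Real.exp (-(Real.log (2 * Real.pi * v)) / 2 + -(z ^ 2) / (2 * v))) := by
    filter_upwards [eventually_gt_nhds hv] with w hw
    exact hk_eq_exp hw z
  refine HasDerivAt.congr_of_eventuallyEq ?_ heq
  refine this.congr_deriv ?_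
  rw [← hk_eq_exp hv z, hk2]
  field_simp
  ring

lemma continuousAt_hk_v {v : ℝ} (hv : 0 < v) (z : ℝ) :
    ContinuousAt (fun v => heatKernel v z) v :=
  (hasDerivAt_hk_v hv z).continuousAt

lemma continuousAt_hk2_v {v : ℝ} (hv : 0 < v) (z : ℝ) :
    ContinuousAt (fun v => hk2 v z) v := by
  unfold hk2
  exact (((continuousAt_const.div (continuousAt_id.pow 2) (pow_ne_zero 2 hv.ne')).sub
    (continuousAt_const.div continuousAt_id hv.ne')).mul (continuousAt_hk_v hv z))



lemma hk_nonneg' (v z : ℝ) : 0 ≤ heatKernel v z :=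
  mul_nonneg (inv_nonneg.2 (Real.sqrt_nonneg _)) (Real.exp_pos _).le

lemma exp_quad_bound {lam v R x y : ℝ} (hv : 0 < v) (hlam : lam < (2*v)⁻¹) (hR : |x| ≤ R) :
    -((x-y)^2)/(2*v) + lam*y^2 ≤ R^2/(2*((2*v)⁻¹-lam)*v^2) - (((2*v)⁻¹-lam)/2)*y^2 := by
  set a := (2*v)⁻¹ - lam with ha
  clear_value a
  have ha0 : 0 < a := by rw [ha]; exact sub_pos.2 hlam
  have hvne : v ≠ 0 := hv.ne'
  have key : x*y/v ≤ a/2*y^2 + x^2/(2*a*v^2) := by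
    have h : 0 ≤ (a*y - x/v)^2 := sq_nonneg _
    have hexp : (a*y - x/v)^2 = a^2*y^2 - 2*a*(x*y/v) + x^2/v^2 := by ring
    have h2 : 2*a*(x*y/v) ≤ a^2*y^2 + x^2/v^2 := by
      have h' : 0 ≤ a^2*y^2 - 2*a*(x*y/v) + x^2/v^2 := by rw [← hexp]; exact h
      linarith
    calc x*y/v = (2*a*(x*y/v))/(2*a) := by field_simp
    _ ≤ (a^2*y^2 + x^2/v^2)/(2*a) := by gcongr
    _ = a/2*y^2 + x^2/(2*a*v^2) := by field_simp
  have hx2 : x^2 ≤ R^2 := by nlinarith [abs_nonneg x, sq_abs x]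
  have expand : -((x-y)^2)/(2*v) + lam*y^2 = -(a*y^2) + x*y/v - x^2/(2*v) := by
    rw [ha]; field_simp; ring
  have hmon : x^2/(2*a*v^2) ≤ R^2/(2*a*v^2) := by gcongr
  have hx2v : 0 ≤ x^2/(2*v) := by positivity
  linarith [key, hmon, hx2v]

/-- The uniform dominating function. -/
noncomputable def gaussBound (c lam v₁ v₂ R y : ℝ) : ℝ :=
  (Real.sqrt (2*Real.pi*v₁))⁻¹ * (c * Real.exp (R^2/(2*((2*v₂)⁻¹-lam)*v₂^2))) *
    Real.exp (-((((2*v₂)⁻¹-lam))/2) * y^2)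

lemma gaussBound_nonneg {c : ℝ} (hc : 0 ≤ c) (lam v₁ v₂ R y : ℝ) :
    0 ≤ gaussBound c lam v₁ v₂ R y := by
  unfold gaussBound; positivity

lemma integrable_gaussBound (c lam v₁ v₂ R : ℝ) (hv₂ : 0 < v₂) (hlam : lam < (2*v₂)⁻¹) :
    Integrable (fun y => gaussBound c lam v₁ v₂ R y) := by
  unfold gaussBound
  have ha : 0 < ((2*v₂)⁻¹-lam)/2 := by have := sub_pos.2 hlam; linarith
  exact (integrable_exp_neg_mul_sq ha).const_mul _

lemma integrable_one_add_sq_mul_exp {b : ℝ} (hb : 0 < b) :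
    Integrable (fun y : ℝ => (1+y^2) * Real.exp (-b*y^2)) := by
  have h1 := integrable_exp_neg_mul_sq hb
  have h2 : Integrable (fun y : ℝ => y^2 * Real.exp (-b*y^2)) := by
    have := integrable_rpow_mul_exp_neg_mul_sq hb (s := 2) (by norm_num)
    have heq : (fun y : ℝ => y ^ (2:ℝ) * Real.exp (-b*y^2)) = fun y : ℝ => y^2 * Real.exp (-b*y^2) := by
      funext y
      rw [show (2:ℝ) = ((2:ℕ):ℝ) by norm_num, Real.rpow_natCast]
    rwa [heq] at this
  have := h1.add h2
  refine this.congr (Eventually.of_forall fun y => ?_)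
  simp only [Pi.add_apply]; ring

lemma integrable_one_add_sq_mul_gaussBound (c lam v₁ v₂ R : ℝ) (hv₂ : 0 < v₂)
    (hlam : lam < (2*v₂)⁻¹) :
    Integrable (fun y => (1+y^2) * gaussBound c lam v₁ v₂ R y) := by
  unfold gaussBound
  have ha : 0 < ((2*v₂)⁻¹-lam)/2 := by have := sub_pos.2 hlam; linarith
  have := (integrable_one_add_sq_mul_exp ha).const_mul
    ((Real.sqrt (2*Real.pi*v₁))⁻¹ * (c * Real.exp (R^2/(2*((2*v₂)⁻¹-lam)*v₂^2))))
  convert this using 1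
  funext y; ring

lemma hk_mul_le {c lam v₁ v₂ v R x y G : ℝ} (hv₁ : 0 < v₁) (hv1 : v₁ ≤ v) (hv2 : v ≤ v₂)
    (hlam : lam < (2*v₂)⁻¹) (hR : |x| ≤ R) (hG0 : 0 ≤ G) (hG : G ≤ c * Real.exp (lam * y^2)) :
    heatKernel v (x-y) * G ≤ gaussBound c lam v₁ v₂ R y := by
  have hv : 0 < v := lt_of_lt_of_le hv₁ hv1
  have hv₂ : 0 < v₂ := lt_of_lt_of_le hv hv2
  have hc : 0 ≤ c := by
    by_contra hcn
    push_neg at hcn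
    nlinarith [Real.exp_pos (lam * y^2), hG0, hG]
  have h1 : (Real.sqrt (2*Real.pi*v))⁻¹ ≤ (Real.sqrt (2*Real.pi*v₁))⁻¹ := by
    have : Real.sqrt (2*Real.pi*v₁) ≤ Real.sqrt (2*Real.pi*v) := by
      apply Real.sqrt_le_sqrt; nlinarith [Real.pi_pos]
    exact inv_anti₀ (Real.sqrt_pos.2 (by positivity)) this
  have h2 : Real.exp (-((x-y)^2)/(2*v)) ≤ Real.exp (-((x-y)^2)/(2*v₂)) := by
    apply Real.exp_le_exp.2
    rw [neg_div, neg_div, neg_le_neg_iff]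
    exact div_le_div_of_nonneg_left (sq_nonneg _) (by linarith) (by linarith)
  have h3 : Real.exp (-((x-y)^2)/(2*v₂)) * (c * Real.exp (lam * y^2))
      ≤ c * Real.exp (R^2/(2*((2*v₂)⁻¹-lam)*v₂^2)) * Real.exp (-((((2*v₂)⁻¹-lam))/2) * y^2) := by
    rw [show Real.exp (-((x-y)^2)/(2*v₂)) * (c * Real.exp (lam * y^2))
        = c * Real.exp (-((x-y)^2)/(2*v₂) + lam * y^2) by rw [Real.exp_add]; ring,
      show c * Real.exp (R^2/(2*((2*v₂)⁻¹-lam)*v₂^2)) * Real.exp (-((((2*v₂)⁻¹-lam))/2) * y^2)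
        = c * Real.exp (R^2/(2*((2*v₂)⁻¹-lam)*v₂^2) + -((((2*v₂)⁻¹-lam))/2) * y^2) by
        rw [Real.exp_add]; ring]
    apply mul_le_mul_of_nonneg_left _ hc
    apply Real.exp_le_exp.2
    have := exp_quad_bound (lam := lam) (v := v₂) (R := R) (x := x) (y := y) hv₂ hlam hR
    linarith
  calc heatKernel v (x-y) * G
      ≤ heatKernel v (x-y) * (c * Real.exp (lam * y^2)) := by
        apply mul_le_mul_of_nonneg_left hG (hk_nonneg' _ _)
    _ = (Real.sqrt (2*Real.pi*v))⁻¹ * (Real.exp (-((x-y)^2)/(2*v)) * (c * Real.exp (lam * y^2))) := by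
        rw [heatKernel]; ring
    _ ≤ (Real.sqrt (2*Real.pi*v₁))⁻¹ * (Real.exp (-((x-y)^2)/(2*v₂)) * (c * Real.exp (lam * y^2))) := by
        exact mul_le_mul h1 (mul_le_mul_of_nonneg_right h2 (by positivity))
          (by positivity) (by positivity)
    _ ≤ (Real.sqrt (2*Real.pi*v₁))⁻¹ * (c * Real.exp (R^2/(2*((2*v₂)⁻¹-lam)*v₂^2)) *
          Real.exp (-((((2*v₂)⁻¹-lam))/2) * y^2)) := by
        apply mul_le_mul_of_nonneg_left h3 (by positivity)
    _ = gaussBound c lam v₁ v₂ R y := by rw [gaussBound]; ring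


lemma integral_hk_one : ∫ z, heatKernel 1 z = 1 := by
  simp only [heatKernel]
  rw [integral_const_mul]
  have h : ∀ z : ℝ, -(z^2)/(2*1) = -(1/2) * z^2 := fun z => by ring
  simp_rw [h]
  rw [integral_gaussian, show Real.pi/(1/2:ℝ) = 2*Real.pi*1 by ring]
  exact inv_mul_cancel₀ (ne_of_gt (Real.sqrt_pos.2 (by positivity)))

lemma hk_scale {v : ℝ} (hv : 0 < v) (w : ℝ) :
    Real.sqrt v * heatKernel v (Real.sqrt v * w) = heatKernel 1 w := by
  have hsv : Real.sqrt v ≠ 0 := (Real.sqrt_pos.2 hv).ne'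
  have hs1 : (0:ℝ) < Real.sqrt (2*Real.pi*1) := Real.sqrt_pos.2 (by positivity)
  unfold heatKernel
  rw [show 2*Real.pi*v = (2*Real.pi*1)*v by ring, Real.sqrt_mul (by positivity)]
  have h2 : -((Real.sqrt v * w)^2) / (2*v) = -(w^2)/(2*1) := by
    rw [mul_pow, Real.sq_sqrt hv.le]
    field_simp
  rw [h2]
  field_simp

lemma heat_rep {v : ℝ} (hv : 0 < v) (g : ℝ → ℝ) (x : ℝ) :
    ∫ y, heatKernel v (x-y) * g y = ∫ w, heatKernel 1 w * g (x - Real.sqrt v * w) := by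
  have hsv : (0:ℝ) < Real.sqrt v := Real.sqrt_pos.2 hv
  have step1 : ∫ y, heatKernel v (x-y) * g y = ∫ z, heatKernel v z * g (x - z) := by
    have h1 : ∫ z, heatKernel v z * g (x - z)
        = ∫ z, heatKernel v (x + z) * g (x - (x + z)) := by
      exact (integral_add_left_eq_self (fun z => heatKernel v z * g (x - z)) x).symm
    have h2 : ∫ z, heatKernel v (x + z) * g (x - (x + z))
        = ∫ z, heatKernel v (x + -z) * g (x - (x + -z)) := by
      exact (integral_neg_eq_self (fun z => heatKernel v (x + z) * g (x - (x + z))) volume).symm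
    rw [h1, h2]
    congr 1
    funext y
    have e1 : x + -y = x - y := by ring
    have e2 : x - (x + -y) = y := by ring
    rw [e2, e1]
  have step2 : ∫ z, heatKernel v z * g (x - z)
      = Real.sqrt v • ∫ w, heatKernel v (Real.sqrt v * w) * g (x - Real.sqrt v * w) := by
    have h := MeasureTheory.Measure.integral_comp_mul_left (fun z => heatKernel v z * g (x - z)) (Real.sqrt v)
    rw [h, abs_of_pos (inv_pos.2 hsv), smul_smul, mul_inv_cancel₀ hsv.ne', one_smul]
  rw [step1, step2, ← MeasureTheory.integral_smul]
  congr 1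
  funext w
  rw [smul_eq_mul, ← mul_assoc, hk_scale hv w]

lemma tendsto_heat {g : ℝ → ℝ} (hg : Continuous g) {c lam : ℝ} (hlam0 : 0 < lam)
    (hgrow : ∀ y, |g y| ≤ c * Real.exp (lam * y ^ 2)) (x : ℝ) :
    Tendsto (fun v => ∫ y, heatKernel v (x-y) * g y) (nhdsWithin 0 (Ioi 0)) (nhds (g x)) := by
  have hc : 0 ≤ c := by
    have h := hgrow 0
    have := abs_nonneg (g 0)
    nlinarith [Real.exp_pos (lam * (0:ℝ)^2)]
  have hrep : (fun v => ∫ y, heatKernel v (x-y) * g y)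
      =ᶠ[nhdsWithin 0 (Ioi 0)] (fun v => ∫ w, heatKernel 1 w * g (x - Real.sqrt v * w)) := by
    filter_upwards [self_mem_nhdsWithin] with v hv
    exact heat_rep hv g x
  rw [tendsto_congr' hrep]
  have hgx : g x = ∫ w, heatKernel 1 w * g x := by
    rw [integral_mul_const, integral_hk_one, one_mul]
  rw [hgx]
  set vs : ℝ := (8*lam)⁻¹ with hvs
  have hvsp : 0 < vs := by positivity
  apply tendsto_integral_filter_of_dominated_convergence
    (bound := fun w => (Real.sqrt (2*Real.pi*1))⁻¹ * (c * Real.exp (2*lam*x^2)) *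
      Real.exp (-(1/4) * w^2))
  · filter_upwards [self_mem_nhdsWithin] with v _
    exact ((continuous_hk 1).mul
      (hg.comp (continuous_const.sub (continuous_const.mul continuous_id)))).aestronglyMeasurable
  · filter_upwards [Ioc_mem_nhdsGT_of_mem (⟨le_rfl, hvsp⟩ : (0:ℝ) ∈ Ico 0 vs)] with v hv
    apply Eventually.of_forall
    intro w
    have hv0 : 0 < v := hv.1
    have hsq : (Real.sqrt v * w)^2 = v * w^2 := by rw [mul_pow, Real.sq_sqrt hv0.le]
    have h1 : (x - Real.sqrt v * w)^2 ≤ 2*x^2 + 2*(v*w^2) := by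
      nlinarith [sq_nonneg (x + Real.sqrt v * w), hsq]
    have h2 : lam * v * w^2 ≤ (1/8) * w^2 := by
      have hlv : lam * v ≤ lam * vs := mul_le_mul_of_nonneg_left hv.2 hlam0.le
      have : lam * vs = 1/8 := by
        rw [hvs]
        field_simp
      nlinarith [sq_nonneg w]
    have hexp : -(w^2)/(2*1) + lam*(x - Real.sqrt v * w)^2 ≤ 2*lam*x^2 + -(1/4) * w^2 := by
      have h3 : lam*(x - Real.sqrt v * w)^2 ≤ lam*(2*x^2 + 2*(v*w^2)) :=
        mul_le_mul_of_nonneg_left h1 hlam0.le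
      nlinarith
    rw [Real.norm_eq_abs, abs_mul, abs_of_nonneg (hk_nonneg' 1 w)]
    calc heatKernel 1 w * |g (x - Real.sqrt v * w)|
        ≤ heatKernel 1 w * (c * Real.exp (lam * (x - Real.sqrt v * w)^2)) :=
          mul_le_mul_of_nonneg_left (hgrow _) (hk_nonneg' 1 w)
      _ = (Real.sqrt (2*Real.pi*1))⁻¹ * c *
            Real.exp (-(w^2)/(2*1) + lam*(x - Real.sqrt v * w)^2) := by
          rw [heatKernel, Real.exp_add]; ring
      _ ≤ (Real.sqrt (2*Real.pi*1))⁻¹ * c * Real.exp (2*lam*x^2 + -(1/4) * w^2) := by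
          apply mul_le_mul_of_nonneg_left (Real.exp_le_exp.2 hexp) (by positivity)
      _ = (Real.sqrt (2*Real.pi*1))⁻¹ * (c * Real.exp (2*lam*x^2)) * Real.exp (-(1/4) * w^2) := by
          rw [Real.exp_add]; ring
  · exact (integrable_exp_neg_mul_sq (by norm_num : (0:ℝ) < 1/4)).const_mul _
  · apply Eventually.of_forall
    intro w
    have hsqrt : Tendsto (fun v : ℝ => Real.sqrt v) (nhdsWithin 0 (Ioi 0)) (nhds 0) := by
      have := (Real.continuous_sqrt.tendsto 0).mono_left
        (nhdsWithin_le_nhds (s := Ioi (0:ℝ)))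
      simpa using this
    have h2 : Tendsto (fun v : ℝ => x - Real.sqrt v * w) (nhdsWithin 0 (Ioi 0)) (nhds x) := by
      have := (hsqrt.mul_const w).const_sub x
      simpa using this
    exact tendsto_const_nhds.mul ((hg.tendsto x).comp h2)

lemma abs_hk1_mul_le {c lam v₁ v₂ v R x y G : ℝ} (hv₁ : 0 < v₁) (hv1 : v₁ ≤ v) (hv2 : v ≤ v₂)
    (hlam : lam < (2*v₂)⁻¹) (hR : |x| ≤ R) (hG0 : 0 ≤ G) (hG : G ≤ c * Real.exp (lam * y^2)) :
    |hk1 v (x-y)| * G ≤ (R+1)/v₁ * ((1+y^2) * gaussBound c lam v₁ v₂ R y) := by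
  have hv : 0 < v := lt_of_lt_of_le hv₁ hv1
  have hR0 : 0 ≤ R := le_trans (abs_nonneg x) hR
  have hgB : 0 ≤ gaussBound c lam v₁ v₂ R y := by
    have := hk_mul_le (y := y) hv₁ hv1 hv2 hlam hR hG0 hG
    have h0 : 0 ≤ heatKernel v (x-y) * G := mul_nonneg (hk_nonneg' _ _) hG0
    linarith
  have hz : |hk1 v (x-y)| = (|x-y|/v) * heatKernel v (x-y) := by
    rw [hk1, abs_mul, abs_div, abs_neg, abs_of_pos hv, abs_of_nonneg (hk_nonneg' _ _)]
  have habs : |x-y| ≤ (R+1)*(1+y^2) := by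
    have h1 : |x-y| ≤ |x| + |y| := abs_sub x y
    have h2 : |y| ≤ 1 + y^2 := by nlinarith [sq_abs y, sq_nonneg (|y|-1)]
    nlinarith [abs_nonneg y, sq_nonneg y]
  have hcoef : |x-y|/v ≤ (R+1)*(1+y^2)/v₁ :=
    div_le_div₀ (by positivity) habs hv₁ hv1
  calc |hk1 v (x-y)| * G = (|x-y|/v) * (heatKernel v (x-y) * G) := by rw [hz]; ring
    _ ≤ ((R+1)*(1+y^2)/v₁) * (heatKernel v (x-y) * G) :=
        mul_le_mul_of_nonneg_right hcoef (mul_nonneg (hk_nonneg' _ _) hG0)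
    _ ≤ ((R+1)*(1+y^2)/v₁) * gaussBound c lam v₁ v₂ R y :=
        mul_le_mul_of_nonneg_left (hk_mul_le hv₁ hv1 hv2 hlam hR hG0 hG) (by positivity)
    _ = (R+1)/v₁ * ((1+y^2) * gaussBound c lam v₁ v₂ R y) := by ring

lemma abs_hk2_mul_le {c lam v₁ v₂ v R x y G : ℝ} (hv₁ : 0 < v₁) (hv1 : v₁ ≤ v) (hv2 : v ≤ v₂)
    (hlam : lam < (2*v₂)⁻¹) (hR : |x| ≤ R) (hG0 : 0 ≤ G) (hG : G ≤ c * Real.exp (lam * y^2)) :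
    |hk2 v (x-y)| * G ≤ ((2*R^2+2)/v₁^2 + 1/v₁) * ((1+y^2) * gaussBound c lam v₁ v₂ R y) := by
  have hv : 0 < v := lt_of_lt_of_le hv₁ hv1
  have hR0 : 0 ≤ R := le_trans (abs_nonneg x) hR
  have hz : |hk2 v (x-y)| ≤ ((x-y)^2/v^2 + 1/v) * heatKernel v (x-y) := by
    rw [hk2, abs_mul, abs_of_nonneg (hk_nonneg' _ _)]
    apply mul_le_mul_of_nonneg_right _ (hk_nonneg' _ _)
    have h1 : |(x-y)^2/v^2 - 1/v| ≤ |(x-y)^2/v^2| + |1/v| := abs_sub _ _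
    rw [abs_of_nonneg (by positivity : (0:ℝ) ≤ (x-y)^2/v^2), abs_of_nonneg (by positivity : (0:ℝ) ≤ 1/v)] at h1
    exact h1
  have hsq : (x-y)^2 ≤ 2*R^2 + 2*y^2 := by
    have hx2 : x^2 ≤ R^2 := by nlinarith [abs_nonneg x, sq_abs x]
    nlinarith [sq_nonneg (x+y)]
  have hcoef : (x-y)^2/v^2 + 1/v ≤ ((2*R^2+2)/v₁^2 + 1/v₁) * (1+y^2) := by
    have h1 : (x-y)^2/v^2 ≤ (2*R^2 + 2*y^2)/v₁^2 := by
      apply div_le_div₀ (by positivity) hsq (by positivity)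
      exact pow_le_pow_left₀ hv₁.le hv1 2
    have h2 : (1:ℝ)/v ≤ 1/v₁ := by
      apply div_le_div₀ (by norm_num) le_rfl hv₁ hv1
    have h3 : (2*R^2 + 2*y^2)/v₁^2 ≤ (2*R^2+2)/v₁^2 * (1+y^2) := by
      rw [div_mul_eq_mul_div]
      apply div_le_div₀ (by positivity) _ (by positivity) le_rfl
      nlinarith [sq_nonneg y, sq_nonneg R]
    have h4 : (1:ℝ)/v₁ ≤ 1/v₁ * (1+y^2) := by
      nlinarith [sq_nonneg y, hv₁, one_div_pos.2 hv₁]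
    nlinarith
  have hgB : 0 ≤ gaussBound c lam v₁ v₂ R y := by
    have := hk_mul_le (y := y) hv₁ hv1 hv2 hlam hR hG0 hG
    have h0 : 0 ≤ heatKernel v (x-y) * G := mul_nonneg (hk_nonneg' _ _) hG0
    linarith
  calc |hk2 v (x-y)| * G ≤ (((x-y)^2/v^2 + 1/v) * heatKernel v (x-y)) * G :=
        mul_le_mul_of_nonneg_right hz hG0
    _ = ((x-y)^2/v^2 + 1/v) * (heatKernel v (x-y) * G) := by ring
    _ ≤ (((2*R^2+2)/v₁^2 + 1/v₁) * (1+y^2)) * (heatKernel v (x-y) * G) :=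
        mul_le_mul_of_nonneg_right hcoef (mul_nonneg (hk_nonneg' _ _) hG0)
    _ ≤ (((2*R^2+2)/v₁^2 + 1/v₁) * (1+y^2)) * gaussBound c lam v₁ v₂ R y := by
        apply mul_le_mul_of_nonneg_left (hk_mul_le hv₁ hv1 hv2 hlam hR hG0 hG) (by positivity)
    _ = ((2*R^2+2)/v₁^2 + 1/v₁) * ((1+y^2) * gaussBound c lam v₁ v₂ R y) := by ring

end Stmt0Aux

open Stmt0Aux in
/-- the linear backward heat-type terminal value problem is solved by
the Gaussian convolution `u(t,x) = ∫ p_{V(T) - V(t)}(x - y) g(y) dy`. -/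
theorem stmt0 (T : ℝ) (hT : 0 < T)
    (V V' : ℝ → ℝ)
    (hVcont : ContinuousOn V (Icc 0 T))
    (hVmono : StrictMonoOn V (Icc 0 T))
    (hV' : ∀ t ∈ Ioo 0 T, HasDerivAt V (V' t) t)
    (hV'cont : ContinuousOn V' (Ioo 0 T))
    (g : ℝ → ℝ) (hg : Continuous g)
    (c lam : ℝ) (hc : 0 < c) (hlam0 : 0 < lam)
    (hlam : lam < (2 * (V T - V 0))⁻¹)
    (hgrow : ∀ y, |g y| ≤ c * Real.exp (lam * y ^ 2))
    (u : ℝ → ℝ → ℝ)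
    (hu : ∀ t x, u t x = ∫ y, heatKernel (V T - V t) (x - y) * g y) :
    (∀ x : ℝ, ∀ t ∈ Ioo 0 T, DifferentiableAt ℝ (fun s => u s x) t)
    ∧ (∀ x : ℝ, ContinuousOn (fun t => deriv (fun s => u s x) t) (Ioo 0 T))
    ∧ (∀ t ∈ Ioo 0 T, ContDiff ℝ 2 (fun x => u t x))
    ∧ (∀ t ∈ Ioo 0 T, ∀ x : ℝ,
        deriv (fun s => u s x) t
          + (1 / 2) * V' t * iteratedDeriv 2 (fun y => u t y) x = 0)
    ∧ (∀ x : ℝ, Tendsto (fun t => u t x) (nhdsWithin T (Iio T)) (nhds (g x))) := by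
  have hT0 : (0:ℝ) ∈ Icc (0:ℝ) T := ⟨le_rfl, hT.le⟩
  have hTT : T ∈ Icc (0:ℝ) T := ⟨hT.le, le_rfl⟩
  have hvT : 0 < V T - V 0 := sub_pos.2 (hVmono hT0 hTT hT)
  have hw_mem : ∀ t ∈ Ioo 0 T, 0 < V T - V t ∧ V T - V t ≤ V T - V 0 := by
    intro t ht
    refine ⟨sub_pos.2 (hVmono ⟨ht.1.le, ht.2.le⟩ hTT ht.2), ?_⟩
    have := hVmono hT0 ⟨ht.1.le, ht.2.le⟩ ht.1
    linarith
  have hlam_v : ∀ {v : ℝ}, 0 < v → v ≤ V T - V 0 → lam < (2*v)⁻¹ := by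
    intro v hv0 hvle
    calc lam < (2*(V T - V 0))⁻¹ := hlam
    _ ≤ (2*v)⁻¹ := by
      apply inv_anti₀ (by linarith) (by linarith)
  -- measurability
  have hmeas : ∀ v x : ℝ, AEStronglyMeasurable (fun y => heatKernel v (x - y) * g y) volume :=
    fun v x => (((continuous_hk v).comp (continuous_const.sub continuous_id)).mul
      hg).aestronglyMeasurable
  have hmeas1 : ∀ v x : ℝ, AEStronglyMeasurable (fun y => hk1 v (x - y) * g y) volume :=
    fun v x => (((continuous_hk1 v).comp (continuous_const.sub continuous_id)).mul
      hg).aestronglyMeasurable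
  have hmeas2 : ∀ v x : ℝ, AEStronglyMeasurable (fun y => hk2 v (x - y) * g y) volume :=
    fun v x => (((continuous_hk2 v).comp (continuous_const.sub continuous_id)).mul
      hg).aestronglyMeasurable
  -- integrability of the main integrand
  have hint : ∀ {v : ℝ}, 0 < v → v ≤ V T - V 0 → ∀ x : ℝ,
      Integrable (fun y => heatKernel v (x - y) * g y) := by
    intro v hv0 hvle x
    refine Integrable.mono' (integrable_gaussBound c lam v v |x| hv0 (hlam_v hv0 hvle))
      (hmeas v x) ?_
    apply Eventually.of_forall; intro y
    rw [Real.norm_eq_abs, abs_mul, abs_of_nonneg (hk_nonneg' _ _)]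
    exact hk_mul_le hv0 le_rfl le_rfl (hlam_v hv0 hvle) le_rfl (abs_nonneg _) (hgrow y)
  have hint1 : ∀ {v : ℝ}, 0 < v → v ≤ V T - V 0 → ∀ x : ℝ,
      Integrable (fun y => hk1 v (x - y) * g y) := by
    intro v hv0 hvle x
    refine Integrable.mono'
      (((integrable_one_add_sq_mul_gaussBound c lam v v |x| hv0 (hlam_v hv0 hvle)).const_mul
        ((|x|+1)/v))) (hmeas1 v x) ?_
    apply Eventually.of_forall; intro y
    rw [Real.norm_eq_abs, abs_mul]
    exact abs_hk1_mul_le hv0 le_rfl le_rfl (hlam_v hv0 hvle) le_rfl (abs_nonneg _) (hgrow y)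
  -- derivative in x
  have HxDeriv : ∀ {v : ℝ}, 0 < v → v ≤ V T - V 0 → ∀ x₀ : ℝ,
      HasDerivAt (fun x => ∫ y, heatKernel v (x - y) * g y)
        (∫ y, hk1 v (x₀ - y) * g y) x₀ := by
    intro v hv0 hvle x₀
    have h := hasDerivAt_integral_of_dominated_loc_of_deriv_le (μ := volume)
      (F := fun x y => heatKernel v (x - y) * g y)
      (F' := fun x y => hk1 v (x - y) * g y) (x₀ := x₀) (s := Metric.ball x₀ 1)
      (bound := fun y => ((|x₀|+1)+1)/v * ((1+y^2) * gaussBound c lam v v (|x₀|+1) y))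
      (Metric.ball_mem_nhds x₀ one_pos) (Eventually.of_forall fun x => hmeas v x) (hint hv0 hvle x₀) (hmeas1 v x₀)
      (Eventually.of_forall fun y => by
        intro x hx
        have hxR : |x| ≤ |x₀| + 1 := by
          have := mem_ball_iff_norm.1 hx
          rw [Real.norm_eq_abs] at this
          have h2 := abs_sub_abs_le_abs_sub x x₀
          linarith
        rw [Real.norm_eq_abs, abs_mul]
        exact abs_hk1_mul_le hv0 le_rfl le_rfl (hlam_v hv0 hvle) hxR (abs_nonneg _) (hgrow y))
      (((integrable_one_add_sq_mul_gaussBound c lam v v (|x₀|+1) hv0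
          (hlam_v hv0 hvle)).const_mul _))
      (Eventually.of_forall fun y => by
        intro x hx
        exact (hasDerivAt_hk_x v y x).mul_const (g y))
    exact h.2
  have HxxDeriv : ∀ {v : ℝ}, 0 < v → v ≤ V T - V 0 → ∀ x₀ : ℝ,
      HasDerivAt (fun x => ∫ y, hk1 v (x - y) * g y)
        (∫ y, hk2 v (x₀ - y) * g y) x₀ := by
    intro v hv0 hvle x₀
    have h := hasDerivAt_integral_of_dominated_loc_of_deriv_le (μ := volume)
      (F := fun x y => hk1 v (x - y) * g y)
      (F' := fun x y => hk2 v (x - y) * g y) (x₀ := x₀) (s := Metric.ball x₀ 1)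
      (bound := fun y => ((2*(|x₀|+1)^2+2)/v^2 + 1/v) *
        ((1+y^2) * gaussBound c lam v v (|x₀|+1) y))
      (Metric.ball_mem_nhds x₀ one_pos) (Eventually.of_forall fun x => hmeas1 v x) (hint1 hv0 hvle x₀) (hmeas2 v x₀)
      (Eventually.of_forall fun y => by
        intro x hx
        have hxR : |x| ≤ |x₀| + 1 := by
          have := mem_ball_iff_norm.1 hx
          rw [Real.norm_eq_abs] at this
          have h2 := abs_sub_abs_le_abs_sub x x₀
          linarith
        rw [Real.norm_eq_abs, abs_mul]
        exact abs_hk2_mul_le hv0 le_rfl le_rfl (hlam_v hv0 hvle) hxR (abs_nonneg _) (hgrow y))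
      (((integrable_one_add_sq_mul_gaussBound c lam v v (|x₀|+1) hv0
          (hlam_v hv0 hvle)).const_mul _))
      (Eventually.of_forall fun y => by
        intro x hx
        exact (hasDerivAt_hk1_x v hv0.ne' y x).mul_const (g y))
    exact h.2
  -- continuity in x of the second derivative integral
  have HxxCont : ∀ {v : ℝ}, 0 < v → v ≤ V T - V 0 →
      Continuous (fun x => ∫ y, hk2 v (x - y) * g y) := by
    intro v hv0 hvle
    rw [continuous_iff_continuousAt]
    intro x₀
    apply continuousAt_of_dominated (Eventually.of_forall fun x => hmeas2 v x)
      (bound := fun y => ((2*(|x₀|+1)^2+2)/v^2 + 1/v) *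
        ((1+y^2) * gaussBound c lam v v (|x₀|+1) y))
    · filter_upwards [Metric.ball_mem_nhds x₀ one_pos] with x hx
      apply Eventually.of_forall; intro y
      have hxR : |x| ≤ |x₀| + 1 := by
        have := mem_ball_iff_norm.1 hx
        rw [Real.norm_eq_abs] at this
        have h2 := abs_sub_abs_le_abs_sub x x₀
        linarith
      rw [Real.norm_eq_abs, abs_mul]
      exact abs_hk2_mul_le hv0 le_rfl le_rfl (hlam_v hv0 hvle) hxR (abs_nonneg _) (hgrow y)
    · exact ((integrable_one_add_sq_mul_gaussBound c lam v v (|x₀|+1) hv0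
        (hlam_v hv0 hvle)).const_mul _)
    · apply Eventually.of_forall; intro y
      exact (((continuous_hk2 v).comp (continuous_sub_right y)).mul
        continuous_const).continuousAt
  -- derivative in t
  have hVmonoM := hVmono.monotoneOn
  have HtDeriv : ∀ x : ℝ, ∀ t₀ ∈ Ioo 0 T,
      HasDerivAt (fun t => u t x)
        (-V' t₀ * ((1/2) * ∫ y, hk2 (V T - V t₀) (x - y) * g y)) t₀ := by
    intro x t₀ ht₀
    obtain ⟨ht1, ht2⟩ := ht₀
    have h0t₁ : 0 < t₀/2 := by linarith
    have ht₂T : (t₀+T)/2 < T := by linarith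
    have ht₁Ioo : t₀/2 ∈ Ioo 0 T := ⟨h0t₁, by linarith⟩
    have ht₂Ioo : (t₀+T)/2 ∈ Ioo 0 T := ⟨by linarith, ht₂T⟩
    set v₁ := V T - V ((t₀+T)/2) with hv₁def
    set v₂ := V T - V (t₀/2) with hv₂def
    have hv₁0 : 0 < v₁ := (hw_mem _ ht₂Ioo).1
    have hv₂le : v₂ ≤ V T - V 0 := (hw_mem _ ht₁Ioo).2
    have hv₂0 : 0 < v₂ := (hw_mem _ ht₁Ioo).1
    have hlam₂ : lam < (2*v₂)⁻¹ := hlam_v hv₂0 hv₂le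
    set M := |V' t₀| + 1 with hMdef
    have hM0 : 0 ≤ M := by rw [hMdef]; positivity
    have hV'c : ContinuousAt V' t₀ := (hV'cont t₀ ⟨ht1, ht2⟩).continuousAt
      (Ioo_mem_nhds ht1 ht2)
    have hMev : {s : ℝ | |V' s| ≤ M} ∈ nhds t₀ := by
      have h1 : {s : ℝ | |V' s - V' t₀| < 1} ∈ nhds t₀ := by
        have h0 := hV'c (Metric.ball_mem_nhds (V' t₀) one_pos)
        exact mem_of_superset h0 (fun s hs => by
          simpa [Metric.mem_ball, Real.dist_eq] using hs)
      filter_upwards [h1] with s hs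
      have h2 := abs_sub_abs_le_abs_sub (V' s) (V' t₀)
      have hs' : |V' s - V' t₀| < 1 := hs
      show |V' s| ≤ M
      rw [hMdef]
      linarith
    obtain ⟨ε₀, hε₀, hsub⟩ := Metric.mem_nhds_iff.1 hMev
    set ε := min (min (t₀ - t₀/2) ((t₀+T)/2 - t₀)) ε₀ with hεdef
    have hε : 0 < ε := lt_min (lt_min (by linarith) (by linarith)) hε₀
    have hball : ∀ t ∈ Metric.ball t₀ ε, t ∈ Ioo 0 T ∧ v₁ ≤ V T - V t ∧
        V T - V t ≤ v₂ ∧ |V' t| ≤ M := by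
      intro t ht
      rw [Metric.mem_ball, Real.dist_eq] at ht
      have h1 : |t - t₀| < t₀ - t₀/2 := lt_of_lt_of_le ht
        (le_trans (min_le_left _ _) (min_le_left _ _))
      have h2 : |t - t₀| < (t₀+T)/2 - t₀ := lt_of_lt_of_le ht
        (le_trans (min_le_left _ _) (min_le_right _ _))
      rw [abs_lt] at h1 h2
      have htl : t₀/2 ≤ t := by linarith
      have htr : t ≤ (t₀+T)/2 := by linarith
      have htIoo : t ∈ Ioo 0 T := ⟨by linarith, by linarith⟩
      have htIcc : t ∈ Icc 0 T := ⟨htIoo.1.le, htIoo.2.le⟩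
      refine ⟨htIoo, ?_, ?_, ?_⟩
      · have := hVmonoM htIcc ⟨(by linarith : (0:ℝ) ≤ (t₀+T)/2), by linarith⟩ htr
        rw [hv₁def]; linarith
      · have := hVmonoM ⟨h0t₁.le, by linarith⟩ htIcc htl
        rw [hv₂def]; linarith
      · have htb : t ∈ Metric.ball t₀ ε₀ := by
          rw [Metric.mem_ball, Real.dist_eq]
          exact lt_of_lt_of_le ht (min_le_right _ _)
        exact hsub htb
    have hwt₀ := hw_mem t₀ ⟨ht1, ht2⟩
    have h := hasDerivAt_integral_of_dominated_loc_of_deriv_le (μ := volume)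
      (F := fun t y => heatKernel (V T - V t) (x - y) * g y)
      (F' := fun t y => ((1/2) * hk2 (V T - V t) (x - y) * (-(V' t))) * g y)
      (x₀ := t₀) (s := Metric.ball t₀ ε)
      (bound := fun y => (1/2 * M) * (((2*|x|^2+2)/v₁^2 + 1/v₁) *
        ((1+y^2) * gaussBound c lam v₁ v₂ |x| y)))
      (Metric.ball_mem_nhds t₀ hε) (Eventually.of_forall fun t => hmeas _ x)
      (hint hwt₀.1 hwt₀.2 x)
      (((continuous_const.mul ((continuous_hk2 _).comp
          (continuous_const.sub continuous_id))).mul continuous_const).mul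
          hg).aestronglyMeasurable
      (Eventually.of_forall fun y => by
        intro t ht
        obtain ⟨htIoo, hwl, hwr, hVM⟩ := hball t ht
        have hb2 := abs_hk2_mul_le (v := V T - V t) (x := x) (y := y) (G := |g y|)
          hv₁0 hwl hwr hlam₂ le_rfl (abs_nonneg _) (hgrow y)
        calc ‖((1/2) * hk2 (V T - V t) (x - y) * (-(V' t))) * g y‖
            = (1/2) * |V' t| * (|hk2 (V T - V t) (x - y)| * |g y|) := by
              rw [Real.norm_eq_abs, abs_mul, abs_mul, abs_mul, abs_neg,
                abs_of_pos (by norm_num : (0:ℝ) < 1/2)]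
              ring
          _ ≤ (1/2 * M) * (((2*|x|^2+2)/v₁^2 + 1/v₁) *
                ((1+y^2) * gaussBound c lam v₁ v₂ |x| y)) := by
              apply mul_le_mul (by linarith) hb2 (by positivity) (by positivity)
          )
      (((integrable_one_add_sq_mul_gaussBound c lam v₁ v₂ |x| hv₂0 hlam₂).const_mul
        _).const_mul _)
      (Eventually.of_forall fun y => by
        intro t ht
        have htIoo := (hball t ht).1
        have hwpos : 0 < V T - V t := lt_of_lt_of_le hv₁0 (hball t ht).2.1
        have hwd : HasDerivAt (fun t => V T - V t) (-(V' t)) t :=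
          (hV' t htIoo).const_sub (V T)
        exact ((hasDerivAt_hk_v hwpos (x - y)).comp t hwd).mul_const (g y))
    have hfun : (fun t => u t x) = fun t => ∫ y, heatKernel (V T - V t) (x - y) * g y :=
      funext fun t => hu t x
    rw [hfun]
    refine h.2.congr_deriv ?_
    rw [show (fun y => ((1/2) * hk2 (V T - V t₀) (x - y) * (-(V' t₀))) * g y)
        = (fun y => (-V' t₀ * (1/2)) * (hk2 (V T - V t₀) (x - y) * g y)) from
        funext fun y => by ring,
      integral_const_mul]
    ring
  -- continuity in t of the second-derivative integral
  have Hphi2ContT : ∀ x : ℝ, ∀ t₀ ∈ Ioo 0 T,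
      ContinuousAt (fun t => ∫ y, hk2 (V T - V t) (x - y) * g y) t₀ := by
    intro x t₀ ht₀
    obtain ⟨ht1, ht2⟩ := ht₀
    have h0t₁ : 0 < t₀/2 := by linarith
    have ht₂T : (t₀+T)/2 < T := by linarith
    have ht₁Ioo : t₀/2 ∈ Ioo 0 T := ⟨h0t₁, by linarith⟩
    have ht₂Ioo : (t₀+T)/2 ∈ Ioo 0 T := ⟨by linarith, ht₂T⟩
    set v₁ := V T - V ((t₀+T)/2) with hv₁def
    set v₂ := V T - V (t₀/2) with hv₂def
    have hv₁0 : 0 < v₁ := (hw_mem _ ht₂Ioo).1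
    have hv₂le : v₂ ≤ V T - V 0 := (hw_mem _ ht₁Ioo).2
    have hv₂0 : 0 < v₂ := (hw_mem _ ht₁Ioo).1
    have hlam₂ : lam < (2*v₂)⁻¹ := hlam_v hv₂0 hv₂le
    set ε := min (t₀ - t₀/2) ((t₀+T)/2 - t₀) with hεdef
    have hε : 0 < ε := lt_min (by linarith) (by linarith)
    have hball : ∀ t ∈ Metric.ball t₀ ε, t ∈ Ioo 0 T ∧ v₁ ≤ V T - V t ∧
        V T - V t ≤ v₂ := by
      intro t ht
      rw [Metric.mem_ball, Real.dist_eq] at ht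
      have h1 : |t - t₀| < t₀ - t₀/2 := lt_of_lt_of_le ht (min_le_left _ _)
      have h2 : |t - t₀| < (t₀+T)/2 - t₀ := lt_of_lt_of_le ht (min_le_right _ _)
      rw [abs_lt] at h1 h2
      have htl : t₀/2 ≤ t := by linarith
      have htr : t ≤ (t₀+T)/2 := by linarith
      have htIoo : t ∈ Ioo 0 T := ⟨by linarith, by linarith⟩
      have htIcc : t ∈ Icc 0 T := ⟨htIoo.1.le, htIoo.2.le⟩
      refine ⟨htIoo, ?_, ?_⟩
      · have := hVmonoM htIcc ⟨(by linarith : (0:ℝ) ≤ (t₀+T)/2), by linarith⟩ htr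
        rw [hv₁def]; linarith
      · have := hVmonoM ⟨h0t₁.le, by linarith⟩ htIcc htl
        rw [hv₂def]; linarith
    apply continuousAt_of_dominated (Eventually.of_forall fun t => hmeas2 _ x)
      (bound := fun y => ((2*|x|^2+2)/v₁^2 + 1/v₁) *
        ((1+y^2) * gaussBound c lam v₁ v₂ |x| y))
    · filter_upwards [Metric.ball_mem_nhds t₀ hε] with t ht
      apply Eventually.of_forall; intro y
      obtain ⟨htIoo, hwl, hwr⟩ := hball t ht
      rw [Real.norm_eq_abs, abs_mul]
      exact abs_hk2_mul_le hv₁0 hwl hwr hlam₂ le_rfl (abs_nonneg _) (hgrow y)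
    · exact ((integrable_one_add_sq_mul_gaussBound c lam v₁ v₂ |x| hv₂0 hlam₂).const_mul _)
    · apply Eventually.of_forall; intro y
      have hwc : ContinuousAt (fun t => V T - V t) t₀ :=
        ((hV' t₀ ⟨ht1, ht2⟩).const_sub (V T)).continuousAt
      have hwpos : 0 < V T - V t₀ := (hw_mem t₀ ⟨ht1, ht2⟩).1
      have h1 : ContinuousAt (fun t => hk2 (V T - V t) (x - y)) t₀ :=
        Filter.Tendsto.comp (continuousAt_hk2_v hwpos (x - y)) hwc
      exact h1.mul continuousAt_const
  refine ⟨fun x t ht => (HtDeriv x t ht).differentiableAt, ?_, ?_, ?_, ?_⟩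
  · -- continuity of the time derivative
    intro x
    have hco : ContinuousOn
        (fun t => -V' t * ((1/2) * ∫ y, hk2 (V T - V t) (x - y) * g y)) (Ioo 0 T) := by
      apply ContinuousOn.mul hV'cont.neg
      intro t ht
      exact (continuousAt_const.mul (Hphi2ContT x t ht)).continuousWithinAt
    exact hco.congr (fun t ht => (HtDeriv x t ht).deriv)
  · -- C² in x
    intro t ht
    have hv0 := (hw_mem t ht).1
    have hvle := (hw_mem t ht).2
    have hueq : (fun x => u t x) = (fun x => ∫ y, heatKernel (V T - V t) (x - y) * g y) :=
      funext fun x => hu t x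
    have hd1 : deriv (fun x => ∫ y, heatKernel (V T - V t) (x - y) * g y)
        = fun x => ∫ y, hk1 (V T - V t) (x - y) * g y :=
      funext fun x => (HxDeriv hv0 hvle x).deriv
    have hd2 : deriv (fun x => ∫ y, hk1 (V T - V t) (x - y) * g y)
        = fun x => ∫ y, hk2 (V T - V t) (x - y) * g y :=
      funext fun x => (HxxDeriv hv0 hvle x).deriv
    rw [hueq, show (2 : WithTop ℕ∞) = 1 + 1 by norm_num, contDiff_succ_iff_deriv]
    refine ⟨fun x => (HxDeriv hv0 hvle x).differentiableAt, by simp, ?_⟩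
    rw [hd1, contDiff_one_iff_deriv]
    refine ⟨fun x => (HxxDeriv hv0 hvle x).differentiableAt, ?_⟩
    rw [hd2]
    exact HxxCont hv0 hvle
  · -- the PDE
    intro t ht x
    have hv0 := (hw_mem t ht).1
    have hvle := (hw_mem t ht).2
    have hueq : (fun y => u t y) = (fun z => ∫ y, heatKernel (V T - V t) (z - y) * g y) :=
      funext fun z => hu t z
    have hd1 : deriv (fun z => ∫ y, heatKernel (V T - V t) (z - y) * g y)
        = fun z => ∫ y, hk1 (V T - V t) (z - y) * g y :=
      funext fun z => (HxDeriv hv0 hvle z).deriv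
    have hd2 : deriv (fun z => ∫ y, hk1 (V T - V t) (z - y) * g y)
        = fun z => ∫ y, hk2 (V T - V t) (z - y) * g y :=
      funext fun z => (HxxDeriv hv0 hvle z).deriv
    have hit : iteratedDeriv 2 (fun y => u t y) x = ∫ y, hk2 (V T - V t) (x - y) * g y := by
      rw [hueq, show (2:ℕ) = 1 + 1 from rfl, iteratedDeriv_succ, iteratedDeriv_one, hd1, hd2]
    have hdt := (HtDeriv x t ht).deriv
    rw [hdt, hit]
    ring
  · -- terminal value
    intro x
    have hVT : ContinuousWithinAt V (Icc 0 T) T := hVcont T hTT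
    have h1 : nhdsWithin T (Iio T) = nhdsWithin T (Ioo 0 T) :=
      (nhdsWithin_Ioo_eq_nhdsLT hT).symm
    have h2 : Tendsto V (nhdsWithin T (Iio T)) (nhds (V T)) := by
      rw [h1]
      exact hVT.tendsto.mono_left (nhdsWithin_mono T Ioo_subset_Icc_self)
    have hwt : Tendsto (fun t => V T - V t) (nhdsWithin T (Iio T))
        (nhdsWithin 0 (Ioi 0)) := by
      rw [tendsto_nhdsWithin_iff]
      constructor
      · have h3 := (tendsto_const_nhds (x := V T) (f := nhdsWithin T (Iio T))).sub h2
        simpa using h3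
      · filter_upwards [Ioo_mem_nhdsLT_of_mem (⟨hT, le_rfl⟩ : T ∈ Ioc 0 T)] with t ht
        exact (hw_mem t ht).1
    have hcomp := (tendsto_heat hg hlam0 hgrow x).comp hwt
    have heq : (fun t => u t x)
        = (fun v => ∫ y, heatKernel v (x - y) * g y) ∘ (fun t => V T - V t) :=
      funext fun t => hu t x
    rw [heq]
    exact hcomp
end

section
/- Let c > 0, λ > 0, and let h : ℝ → ℝ be a continuous function with |h(y)| ≤ c·exp(λy²) for all y ∈ ℝ. Fix v > 0 with 4λv < 1. Then the function x ↦ (P_v h)(x) = ∫_ℝ p_v(x−y) h(y) dy is twice differentiable on ℝ with second derivative (P_v h)″(x) = ∫_ℝ (∂²p_v/∂x²)(x−y) h(y) dy, and there exists a constant M′ > 0 (depending only on c, λ and v) such that |(P_v h)″(x)| ≤ M′·exp(2λx²) for all x ∈ ℝ. -/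
open MeasureTheory Set Filter

lemma hk_hasDerivAt (v : ℝ) (hv : 0 < v) (x : ℝ) :
    HasDerivAt (heatKernel v) (-(x / v) * heatKernel v x) x := by
  have h1 : HasDerivAt (fun x : ℝ => -(x^2) / (2*v)) (-(x/v)) x := by
    have := ((hasDerivAt_pow 2 x).neg).div_const (2*v)
    refine this.congr_deriv ?_
    field_simp
    ring
  have h2 := h1.exp.const_mul (Real.sqrt (2 * Real.pi * v))⁻¹
  refine h2.congr_deriv ?_
  unfold heatKernel; ring

lemma hk_hasDerivAt2 (v : ℝ) (hv : 0 < v) (x : ℝ) :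
    HasDerivAt (fun u : ℝ => -(u / v) * heatKernel v u)
      ((x^2/v^2 - 1/v) * heatKernel v x) x := by
  have h1 : HasDerivAt (fun u : ℝ => -(u / v)) (-(1/v)) x := by
    exact ((hasDerivAt_id x).div_const v).neg
  have h2 := h1.mul (hk_hasDerivAt v hv x)
  refine h2.congr_deriv ?_
  field_simp
  ring

lemma sq_le_exp (δ t : ℝ) (hδ : 0 < δ) : t^2 ≤ δ⁻¹ * Real.exp (δ * t^2) := by
  have h1 : δ * t^2 ≤ Real.exp (δ * t^2) := (Real.add_one_le_exp _).trans' (by nlinarith)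
  have h2 := mul_le_mul_of_nonneg_left h1 (le_of_lt (inv_pos.mpr hδ))
  rwa [← mul_assoc, inv_mul_cancel₀ (ne_of_gt hδ), one_mul] at h2

lemma abs_le_exp (δ t : ℝ) (hδ : 0 < δ) : |t| ≤ (1 + δ⁻¹) * Real.exp (δ * t^2) := by
  have h1 := sq_le_exp δ t hδ
  have h3 : |t| ≤ 1 + t^2 := by nlinarith [sq_abs t, sq_nonneg (|t| - 1)]
  calc |t| ≤ 1 + t^2 := h3
    _ ≤ 1 * Real.exp (δ * t^2) + δ⁻¹ * Real.exp (δ * t^2) := by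
        have : (1:ℝ) ≤ Real.exp (δ * t^2) := Real.one_le_exp (by positivity)
        nlinarith
    _ = (1 + δ⁻¹) * Real.exp (δ * t^2) := by ring

lemma split_sq (A B ε : ℝ) (hε : 0 < ε) (hB : B^2 ≤ 1) :
    (1-ε) * A^2 - ε⁻¹ ≤ (B - A)^2 := by
  have hinv : ε * ε⁻¹ = 1 := mul_inv_cancel₀ (ne_of_gt hε)
  have key : 0 ≤ ε * ((B - A)^2 - ((1-ε) * A^2 - ε⁻¹)) := by
    nlinarith [sq_nonneg (ε * A - B), sq_nonneg B]
  nlinarith [key]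

lemma kernel_bds (v δ : ℝ) (hv : 0 < v) (hδ : 0 < δ) :
    ∃ C > 0, ∀ u : ℝ,
      |heatKernel v u| ≤ C * Real.exp (-((2*v)⁻¹ - δ) * u^2) ∧
      |(-(u / v)) * heatKernel v u| ≤ C * Real.exp (-((2*v)⁻¹ - δ) * u^2) ∧
      |(u^2/v^2 - 1/v) * heatKernel v u| ≤ C * Real.exp (-((2*v)⁻¹ - δ) * u^2) := by
  have hπ := Real.pi_pos
  set c₀ := (Real.sqrt (2 * Real.pi * v))⁻¹ with hc₀
  have hc₀pos : 0 < c₀ := by rw [hc₀]; positivity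
  set C := c₀ * (1 + (1+δ⁻¹)/v + (δ⁻¹/v^2 + 1/v)) with hC
  have hCpos : 0 < C := by rw [hC]; positivity
  refine ⟨C, hCpos, fun u => ?_⟩
  set E := Real.exp (δ * u^2) with hE
  set X := Real.exp (-(u^2) / (2*v)) with hX
  have hexp : Real.exp (-((2*v)⁻¹ - δ) * u^2) = E * X := by
    rw [hE, hX, ← Real.exp_add]; ring_nf
  have hE1 : (1:ℝ) ≤ E := Real.one_le_exp (by positivity)
  have hXpos : 0 < X := Real.exp_pos _
  have hK : heatKernel v u = c₀ * X := rfl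
  have hKnn : 0 ≤ heatKernel v u := by rw [hK]; positivity
  have h1 := sq_le_exp δ u hδ
  have h2 := abs_le_exp δ u hδ
  have hvi : 0 < v⁻¹ := inv_pos.mpr hv
  have hδi : 0 < δ⁻¹ := inv_pos.mpr hδ
  refine ⟨?_, ?_, ?_⟩
  · rw [abs_of_nonneg hKnn, hexp, hK]
    have hs : (0:ℝ) ≤ (1+δ⁻¹)/v + (δ⁻¹/v^2 + 1/v) := by positivity
    have hcC : c₀ ≤ C := by
      rw [hC]; nlinarith [mul_nonneg hc₀pos.le hs]
    calc c₀ * X ≤ c₀ * (E * X) := by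
          exact mul_le_mul_of_nonneg_left (le_mul_of_one_le_left hXpos.le hE1) hc₀pos.le
      _ ≤ C * (E * X) := mul_le_mul_of_nonneg_right hcC (by positivity)
  · rw [abs_mul, abs_of_nonneg hKnn, hexp, hK, abs_neg, abs_div, abs_of_pos hv]
    calc |u| / v * (c₀ * X) ≤ ((1+δ⁻¹) * E) / v * (c₀ * X) := by
          gcongr
      _ = (c₀ * ((1+δ⁻¹)/v)) * (E * X) := by ring
      _ ≤ C * (E * X) := by
          have hcc : c₀ * ((1+δ⁻¹)/v) ≤ C := by
            rw [hC]
            have : (0:ℝ) ≤ c₀ * (1 + (δ⁻¹/v^2 + 1/v)) := by positivity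
            nlinarith
          exact mul_le_mul_of_nonneg_right hcc (by positivity)
  · rw [abs_mul, abs_of_nonneg hKnn, hexp, hK]
    have habs : |u^2/v^2 - 1/v| ≤ u^2/v^2 + 1/v := by
      refine (abs_sub _ _).trans ?_
      rw [abs_of_nonneg (by positivity), abs_of_nonneg (by positivity)]
    have hu2 : u^2 ≤ δ⁻¹ * E := h1
    have hvE : 1/v ≤ (1/v) * E := le_mul_of_one_le_right (by positivity) hE1
    calc |u^2/v^2 - 1/v| * (c₀ * X) ≤ (u^2/v^2 + 1/v) * (c₀ * X) := by
          gcongr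
      _ ≤ ((δ⁻¹ * E)/v^2 + (1/v) * E) * (c₀ * X) := by gcongr
      _ = (c₀ * (δ⁻¹/v^2 + 1/v)) * (E * X) := by ring
      _ ≤ C * (E * X) := by
          have hcc : c₀ * (δ⁻¹/v^2 + 1/v) ≤ C := by
            rw [hC]
            have : (0:ℝ) ≤ c₀ * (1 + (1+δ⁻¹)/v) := by positivity
            nlinarith
          exact mul_le_mul_of_nonneg_right hcc (by positivity)

set_option maxHeartbeats 2000000 in
/-- the Gaussian convolution is twice differentiable, the second derivative
is obtained by differentiating the kernel twice
(`∂²p_v/∂x²(x) = (x²/v² - 1/v) p_v(x)`), and it satisfies a Gaussian growth bound. -/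
theorem stmt3 (c lam v : ℝ) (hc : 0 < c) (hlam : 0 < lam) (hv : 0 < v)
    (hvl : 4 * lam * v < 1)
    (h : ℝ → ℝ) (hcont : Continuous h)
    (hgrow : ∀ y, |h y| ≤ c * Real.exp (lam * y ^ 2)) :
    (∀ x : ℝ, DifferentiableAt ℝ (fun z => ∫ y, heatKernel v (z - y) * h y) x)
    ∧ (∀ x : ℝ, HasDerivAt (deriv (fun z => ∫ y, heatKernel v (z - y) * h y))
        (∫ y, ((x - y) ^ 2 / v ^ 2 - 1 / v) * heatKernel v (x - y) * h y) x)
    ∧ ∃ M' > 0, ∀ x : ℝ,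
        |∫ y, ((x - y) ^ 2 / v ^ 2 - 1 / v) * heatKernel v (x - y) * h y|
          ≤ M' * Real.exp (2 * lam * x ^ 2) := by
  have hπ := Real.pi_pos
  have h2v : (0:ℝ) < 2*v := by linarith
  have h2l : 2*lam < (2*v)⁻¹ := by
    rw [inv_eq_one_div, lt_div_iff₀ h2v]; nlinarith
  set g : ℝ := (2*v)⁻¹ - 2*lam with hgdef
  have hg : 0 < g := by rw [hgdef]; linarith
  obtain ⟨C, hCpos, hKb⟩ := kernel_bds v (g/2) hv (by linarith)
  set b : ℝ := (2*v)⁻¹ - g/2 with hbdef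
  have hbval : b = 2*lam + g/2 := by rw [hbdef, hgdef]; ring
  have hbpos : 0 < b := by rw [hbval]; linarith
  set ε : ℝ := g/(4*b) with hεdef
  have hεpos : 0 < ε := by rw [hεdef]; positivity
  have hbe : b * ε = g/4 := by
    rw [hεdef]; field_simp
  -- continuity facts
  have hkcont : Continuous (heatKernel v) := by
    unfold heatKernel; fun_prop
  have hFcont : ∀ z : ℝ, Continuous (fun y => heatKernel v (z - y) * h y) := by
    intro z; exact ((hkcont.comp (continuous_const.sub continuous_id)).mul hcont)
  have hF1cont : ∀ z : ℝ, Continuous (fun y => (-((z - y) / v) * heatKernel v (z - y)) * h y) := by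
    intro z; fun_prop
  have hF2cont : ∀ z : ℝ, Continuous
      (fun y => ((z - y)^2/v^2 - 1/v) * heatKernel v (z - y) * h y) := by
    intro z; fun_prop
  -- pointwise derivatives
  have hd1 : ∀ z y : ℝ, HasDerivAt (fun z => heatKernel v (z - y) * h y)
      ((-((z - y) / v) * heatKernel v (z - y)) * h y) z := by
    intro z y
    have := ((hk_hasDerivAt v hv (z-y)).comp z ((hasDerivAt_id z).sub_const y)).mul_const (h y)
    simpa using this
  have hd2 : ∀ z y : ℝ, HasDerivAt (fun z => (-((z - y) / v) * heatKernel v (z - y)) * h y)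
      (((z - y)^2/v^2 - 1/v) * heatKernel v (z - y) * h y) z := by
    intro z y
    have := ((hk_hasDerivAt2 v hv (z-y)).comp z ((hasDerivAt_id z).sub_const y)).mul_const (h y)
    simpa using this
  -- master bound
  have master : ∀ x₀ z y : ℝ, (z - x₀)^2 ≤ 1 →
      C * Real.exp (-b*(z-y)^2) * |h y|
        ≤ (C * c * Real.exp (b * ε⁻¹ + 2*lam*x₀^2)) * Real.exp (-(g/4)*(y-x₀)^2) := by
    intro x₀ z y hz
    have hsp := split_sq (y - x₀) (z - x₀) ε hεpos hz
    have hy2 : y^2 ≤ 2*(y-x₀)^2 + 2*x₀^2 := by nlinarith [sq_nonneg (y - 2*x₀)]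
    have hexp_le : -b*(z-y)^2 + lam*y^2
        ≤ (b * ε⁻¹ + 2*lam*x₀^2) + (-(g/4)*(y-x₀)^2) := by
      have H1 : b*((1-ε)*(y-x₀)^2 - ε⁻¹) ≤ b*((z - x₀) - (y - x₀))^2 :=
        mul_le_mul_of_nonneg_left hsp hbpos.le
      have H2 : lam*y^2 ≤ lam*(2*(y-x₀)^2 + 2*x₀^2) :=
        mul_le_mul_of_nonneg_left hy2 hlam.le
      have H3 : b*ε*(y-x₀)^2 = g/4*(y-x₀)^2 := by rw [hbe]
      have H4 : b*(y-x₀)^2 = (2*lam+g/2)*(y-x₀)^2 := by rw [hbval]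
      nlinarith [H1, H2, H3, H4]
    calc C * Real.exp (-b*(z-y)^2) * |h y|
        ≤ C * Real.exp (-b*(z-y)^2) * (c * Real.exp (lam*y^2)) := by
          gcongr
          exact hgrow y
      _ = C * c * Real.exp (-b*(z-y)^2 + lam*y^2) := by rw [Real.exp_add]; ring
      _ ≤ C * c * Real.exp ((b * ε⁻¹ + 2*lam*x₀^2) + (-(g/4)*(y-x₀)^2)) :=
          mul_le_mul_of_nonneg_left (Real.exp_le_exp.mpr hexp_le) (by positivity)
      _ = (C * c * Real.exp (b * ε⁻¹ + 2*lam*x₀^2)) * Real.exp (-(g/4)*(y-x₀)^2) := by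
          rw [Real.exp_add]; ring
  -- bound function and integrability
  have hDint : ∀ x₀ : ℝ, Integrable
      (fun y => (C * c * Real.exp (b * ε⁻¹ + 2*lam*x₀^2)) * Real.exp (-(g/4)*(y-x₀)^2)) := by
    intro x₀
    have : Integrable (fun t : ℝ => Real.exp (-(g/4)*t^2)) := integrable_exp_neg_mul_sq (by linarith)
    exact (this.comp_sub_right x₀).const_mul _
  -- uniform bounds for kernels applied with h
  have key0 : ∀ x₀ z y : ℝ, (z - x₀)^2 ≤ 1 →
      |heatKernel v (z - y) * h y|
        ≤ (C * c * Real.exp (b * ε⁻¹ + 2*lam*x₀^2)) * Real.exp (-(g/4)*(y-x₀)^2) := by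
    intro x₀ z y hz
    rw [abs_mul]
    refine le_trans ?_ (master x₀ z y hz)
    exact mul_le_mul_of_nonneg_right ((hKb (z-y)).1) (abs_nonneg _)
  have key1 : ∀ x₀ z y : ℝ, (z - x₀)^2 ≤ 1 →
      |(-((z - y) / v) * heatKernel v (z - y)) * h y|
        ≤ (C * c * Real.exp (b * ε⁻¹ + 2*lam*x₀^2)) * Real.exp (-(g/4)*(y-x₀)^2) := by
    intro x₀ z y hz
    rw [abs_mul]
    refine le_trans ?_ (master x₀ z y hz)
    exact mul_le_mul_of_nonneg_right ((hKb (z-y)).2.1) (abs_nonneg _)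
  have key2 : ∀ x₀ z y : ℝ, (z - x₀)^2 ≤ 1 →
      |((z - y)^2/v^2 - 1/v) * heatKernel v (z - y) * h y|
        ≤ (C * c * Real.exp (b * ε⁻¹ + 2*lam*x₀^2)) * Real.exp (-(g/4)*(y-x₀)^2) := by
    intro x₀ z y hz
    rw [abs_mul]
    refine le_trans ?_ (master x₀ z y hz)
    exact mul_le_mul_of_nonneg_right ((hKb (z-y)).2.2) (abs_nonneg _)
  have hball : ∀ x₀ : ℝ, ∀ z ∈ Metric.ball x₀ 1, (z - x₀)^2 ≤ 1 := by
    intro x₀ z hz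
    rw [Metric.mem_ball, Real.dist_eq] at hz
    nlinarith [abs_nonneg (z - x₀), sq_abs (z - x₀)]
  -- integrability of F z for any z
  have hFint : ∀ z : ℝ, Integrable (fun y => heatKernel v (z - y) * h y) := by
    intro z
    refine (hDint z).mono (hFcont z).aestronglyMeasurable (ae_of_all _ fun y => ?_)
    rw [Real.norm_eq_abs, Real.norm_eq_abs]
    refine (key0 z z y (by simp)).trans (le_abs_self _)
  have hF1int : ∀ z : ℝ, Integrable (fun y => (-((z - y) / v) * heatKernel v (z - y)) * h y) := by
    intro z
    refine (hDint z).mono (hF1cont z).aestronglyMeasurable (ae_of_all _ fun y => ?_)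
    rw [Real.norm_eq_abs, Real.norm_eq_abs]
    refine (key1 z z y (by simp)).trans (le_abs_self _)
  -- first differentiation under the integral
  have main1 : ∀ x₀ : ℝ, HasDerivAt (fun z => ∫ y, heatKernel v (z - y) * h y)
      (∫ y, (-((x₀ - y) / v) * heatKernel v (x₀ - y)) * h y) x₀ := by
    intro x₀
    have := hasDerivAt_integral_of_dominated_loc_of_deriv_le (μ := volume)
      (F := fun z y => heatKernel v (z - y) * h y)
      (F' := fun z y => (-((z - y) / v) * heatKernel v (z - y)) * h y)
      (bound := fun y => (C * c * Real.exp (b * ε⁻¹ + 2*lam*x₀^2)) * Real.exp (-(g/4)*(y-x₀)^2))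
      (Metric.ball_mem_nhds x₀ one_pos)
      (Eventually.of_forall fun z => (hFcont z).aestronglyMeasurable)
      (hFint x₀) ((hF1cont x₀).aestronglyMeasurable)
      (ae_of_all _ fun y z hz => by
        rw [Real.norm_eq_abs]; exact key1 x₀ z y (hball x₀ z hz))
      (hDint x₀)
      (ae_of_all _ fun y z hz => hd1 z y)
    exact this.2
  -- second differentiation under the integral
  have main2 : ∀ x₀ : ℝ,
      Integrable (fun y => ((x₀ - y)^2/v^2 - 1/v) * heatKernel v (x₀ - y) * h y) ∧
      HasDerivAt (fun z => ∫ y, (-((z - y) / v) * heatKernel v (z - y)) * h y)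
        (∫ y, ((x₀ - y)^2/v^2 - 1/v) * heatKernel v (x₀ - y) * h y) x₀ := by
    intro x₀
    exact hasDerivAt_integral_of_dominated_loc_of_deriv_le (μ := volume)
      (F := fun z y => (-((z - y) / v) * heatKernel v (z - y)) * h y)
      (F' := fun z y => ((z - y)^2/v^2 - 1/v) * heatKernel v (z - y) * h y)
      (bound := fun y => (C * c * Real.exp (b * ε⁻¹ + 2*lam*x₀^2)) * Real.exp (-(g/4)*(y-x₀)^2))
      (Metric.ball_mem_nhds x₀ one_pos)
      (Eventually.of_forall fun z => (hF1cont z).aestronglyMeasurable)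
      (hF1int x₀) ((hF2cont x₀).aestronglyMeasurable)
      (ae_of_all _ fun y z hz => by
        rw [Real.norm_eq_abs]; exact key2 x₀ z y (hball x₀ z hz))
      (hDint x₀)
      (ae_of_all _ fun y z hz => hd2 z y)
  have hderiv_eq : deriv (fun z => ∫ y, heatKernel v (z - y) * h y)
      = fun z => ∫ y, (-((z - y) / v) * heatKernel v (z - y)) * h y :=
    funext fun z => (main1 z).deriv
  refine ⟨fun x => (main1 x).differentiableAt, fun x => ?_, ?_⟩
  · rw [hderiv_eq]
    exact (main2 x).2
  -- growth bound
  · set I : ℝ := Real.sqrt (Real.pi / (g/2)) with hI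
    have hIpos : 0 < I := Real.sqrt_pos.mpr (by positivity)
    refine ⟨C * c * I, by positivity, fun x => ?_⟩
    have hint2 : Integrable (fun y : ℝ =>
        (C * c * Real.exp (2*lam*x^2)) * Real.exp (-(g/2)*(y-x)^2)) := by
      have : Integrable (fun t : ℝ => Real.exp (-(g/2)*t^2)) :=
        integrable_exp_neg_mul_sq (by linarith)
      exact (this.comp_sub_right x).const_mul _
    have hptwise : ∀ y : ℝ, |((x - y)^2/v^2 - 1/v) * heatKernel v (x - y) * h y|
        ≤ (C * c * Real.exp (2*lam*x^2)) * Real.exp (-(g/2)*(y-x)^2) := by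
      intro y
      rw [abs_mul]
      have hk2 := mul_le_mul_of_nonneg_right ((hKb (x-y)).2.2) (abs_nonneg (h y))
      refine hk2.trans ?_
      have hhy := hgrow y
      have hy2 : y^2 ≤ 2*(y-x)^2 + 2*x^2 := by nlinarith [sq_nonneg (y - 2*x)]
      have hexp_le : -b*(x-y)^2 + lam*y^2 ≤ 2*lam*x^2 + (-(g/2)*(y-x)^2) := by
        have H2 : lam*y^2 ≤ lam*(2*(y-x)^2 + 2*x^2) := mul_le_mul_of_nonneg_left hy2 hlam.le
        have H4 : b*(x-y)^2 = (2*lam+g/2)*(x-y)^2 := by rw [hbval]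
        nlinarith [H2, H4]
      calc C * Real.exp (-b*(x-y)^2) * |h y|
          ≤ C * Real.exp (-b*(x-y)^2) * (c * Real.exp (lam*y^2)) := by
            gcongr
        _ = C * c * Real.exp (-b*(x-y)^2 + lam*y^2) := by rw [Real.exp_add]; ring
        _ ≤ C * c * Real.exp (2*lam*x^2 + (-(g/2)*(y-x)^2)) :=
            mul_le_mul_of_nonneg_left (Real.exp_le_exp.mpr hexp_le) (by positivity)
        _ = (C * c * Real.exp (2*lam*x^2)) * Real.exp (-(g/2)*(y-x)^2) := by
            rw [Real.exp_add]; ring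
    have habsint : Integrable (fun y => |((x - y)^2/v^2 - 1/v) * heatKernel v (x - y) * h y|) :=
      (main2 x).1.abs
    calc |∫ y, ((x - y)^2/v^2 - 1/v) * heatKernel v (x - y) * h y|
        ≤ ∫ y, |((x - y)^2/v^2 - 1/v) * heatKernel v (x - y) * h y| := by
          exact
            norm_integral_le_integral_norm (μ := volume) (fun y => ((x - y)^2/v^2 - 1/v) * heatKernel v (x - y) * h y)
      _ ≤ ∫ y, (C * c * Real.exp (2*lam*x^2)) * Real.exp (-(g/2)*(y-x)^2) := by
          exact integral_mono habsint hint2 hptwise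
      _ = (C * c * Real.exp (2*lam*x^2)) * ∫ y, Real.exp (-(g/2)*(y-x)^2) := by
          rw [integral_const_mul]
      _ = (C * c * Real.exp (2*lam*x^2)) * I := by
          rw [integral_sub_right_eq_self (μ := volume) (fun t : ℝ => Real.exp (-(g/2)*t^2)) x,
            integral_gaussian]
      _ = C * c * I * Real.exp (2*lam*x^2) := by ring
end

section
/- Let w : ℝ → ℝ be continuous and of polynomial growth, i.e. there exist C > 0 and m ∈ ℕ with |w(y)| ≤ C·(1 + |y|)^m for all y ∈ ℝ. Suppose there exists ε > 0 such that (P_v w)(z) = ∫_ℝ p_v(z−y) w(y) dy = 0 for all z ∈ ℝ and all v ∈ (0, ε). Then w(y) = 0 for all y ∈ ℝ. -/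
open MeasureTheory Set Filter Topology

noncomputable def stdGauss (u : ℝ) : ℝ :=
  (Real.sqrt (2 * Real.pi))⁻¹ * Real.exp (-(u ^ 2) / 2)

lemma stdGauss_nonneg (u : ℝ) : 0 ≤ stdGauss u := by
  unfold stdGauss; positivity

lemma continuous_stdGauss : Continuous stdGauss := by
  unfold stdGauss
  exact continuous_const.mul (Real.continuous_exp.comp (by continuity))

lemma integral_stdGauss : ∫ u, stdGauss u = 1 := by
  unfold stdGauss
  rw [integral_const_mul]
  have h : ∀ u : ℝ, Real.exp (-(u ^ 2) / 2) = Real.exp (-(2⁻¹ : ℝ) * u ^ 2) := by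
    intro u; ring_nf
  simp_rw [h, integral_gaussian]
  rw [show (Real.pi / 2⁻¹) = 2 * Real.pi by ring]
  rw [inv_mul_cancel₀ (Real.sqrt_ne_zero'.2 (by positivity))]

lemma integrable_pow_exp (n : ℕ) {b : ℝ} (hb : 0 < b) :
    Integrable fun x : ℝ => x ^ n * Real.exp (-b * x ^ 2) := by
  have := integrable_rpow_mul_exp_neg_mul_sq hb (s := (n : ℝ))
    (lt_of_lt_of_le (by norm_num) (Nat.cast_nonneg n))
  simpa [Real.rpow_natCast] using this

lemma integrable_poly_gauss (m : ℕ) :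
    Integrable fun u : ℝ => (2 + u ^ 2) ^ m * Real.exp (-(u ^ 2) / 2) := by
  have h : ∀ u : ℝ, (2 + u ^ 2) ^ m * Real.exp (-(u ^ 2) / 2) =
      ∑ k ∈ Finset.range (m + 1),
        ((2 : ℝ) ^ k * m.choose k) * (u ^ (2 * (m - k)) * Real.exp (-(2⁻¹ : ℝ) * u ^ 2)) := by
    intro u
    rw [add_pow, Finset.sum_mul]
    refine Finset.sum_congr rfl fun k hk => ?_
    rw [pow_mul]
    have : Real.exp (-(u ^ 2) / 2) = Real.exp (-(2⁻¹ : ℝ) * u ^ 2) := by ring_nf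
    rw [this]; ring
  simp_rw [h]
  apply integrable_finset_sum
  intro k hk
  exact ((integrable_pow_exp (2 * (m - k)) (by norm_num : (0:ℝ) < 2⁻¹))).const_mul _

lemma conv_eq (w : ℝ → ℝ) (z : ℝ) {v : ℝ} (hv : 0 < v) :
    ∫ y, heatKernel v (z - y) * w y = ∫ u, stdGauss u * w (z - Real.sqrt v * u) := by
  have hsv : (0 : ℝ) < Real.sqrt v := Real.sqrt_pos.2 hv
  have h1 : ∫ y, heatKernel v (z - y) * w y
      = ∫ t, heatKernel v t * w (z - t) := by
    rw [← integral_sub_left_eq_self (fun t => heatKernel v t * w (z - t)) volume z]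
    simp
  have h2 := Measure.integral_comp_mul_left
    (fun t => heatKernel v t * w (z - t)) (Real.sqrt v)
  -- h2 : ∫ x, f (√v * x) = |(√v)⁻¹| • ∫ t, f t
  have key : ∀ u : ℝ, stdGauss u * w (z - Real.sqrt v * u)
      = Real.sqrt v * (heatKernel v (Real.sqrt v * u) * w (z - Real.sqrt v * u)) := by
    intro u
    unfold stdGauss heatKernel
    have e1 : (Real.sqrt v * u) ^ 2 = v * u ^ 2 := by
      rw [mul_pow, Real.sq_sqrt hv.le]
    rw [e1]
    have e2 : -(v * u ^ 2) / (2 * v) = -(u ^ 2) / 2 := by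
      field_simp
    rw [e2]
    have e3 : Real.sqrt (2 * Real.pi * v) = Real.sqrt (2 * Real.pi) * Real.sqrt v :=
      Real.sqrt_mul (by positivity) v
    rw [e3, mul_inv]
    field_simp
  rw [h1]
  simp_rw [key]
  rw [integral_const_mul, h2, abs_of_pos (inv_pos.2 hsv), smul_eq_mul, ← mul_assoc,
    mul_inv_cancel₀ hsv.ne', one_mul]

/-- a continuous function of polynomial growth whose Gaussian
convolutions `(P_v w)(z)` vanish for all `z` and all small `v > 0`
vanishes identically. -/
theorem stmt8 (w : ℝ → ℝ) (hw : Continuous w)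
    (C : ℝ) (hC : 0 < C) (m : ℕ)
    (hgrow : ∀ y, |w y| ≤ C * (1 + |y|) ^ m)
    (ε : ℝ) (hε : 0 < ε)
    (hzero : ∀ z : ℝ, ∀ v ∈ Ioo (0:ℝ) ε,
      ∫ y, heatKernel v (z - y) * w y = 0) :
    ∀ y : ℝ, w y = 0 := by
  intro z
  set l : Filter ℝ := 𝓝[Ioo (0:ℝ) ε] 0 with hl
  have hlne : l.NeBot := by
    refine mem_closure_iff_nhdsWithin_neBot.mp ?_
    rw [closure_Ioo hε.ne]
    exact ⟨le_refl 0, hε.le⟩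
  set K : ℝ := 1 + |z| + Real.sqrt ε with hK
  have hK0 : 0 < K := by positivity
  set G : ℝ → ℝ := fun u =>
    (C * K ^ m * (Real.sqrt (2 * Real.pi))⁻¹) * ((2 + u ^ 2) ^ m * Real.exp (-(u ^ 2) / 2))
    with hG
  have hGint : Integrable G := (integrable_poly_gauss m).const_mul _
  have h1 : Tendsto (fun v => ∫ u, stdGauss u * w (z - Real.sqrt v * u)) l (𝓝 (w z)) := by
    have := tendsto_integral_filter_of_dominated_convergence (μ := volume) (l := l)
      (F := fun v u => stdGauss u * w (z - Real.sqrt v * u))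
      (f := fun u => stdGauss u * w z) G
      (Eventually.of_forall fun v =>
        (continuous_stdGauss.mul (hw.comp (by continuity))).aestronglyMeasurable)
      ?_ hGint ?_
    · have e : ∫ u, stdGauss u * w z = w z := by
        rw [integral_mul_const, integral_stdGauss, one_mul]
      rwa [e] at this
    · filter_upwards [self_mem_nhdsWithin] with v hv
      refine Eventually.of_forall fun u => ?_
      have hsv : Real.sqrt v ≤ Real.sqrt ε := Real.sqrt_le_sqrt hv.2.le
      have hsv0 : 0 ≤ Real.sqrt v := Real.sqrt_nonneg v
      have habs : |z - Real.sqrt v * u| ≤ |z| + Real.sqrt ε * |u| := by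
        calc |z - Real.sqrt v * u| ≤ |z| + |Real.sqrt v * u| := abs_sub _ _
          _ ≤ |z| + Real.sqrt ε * |u| := by
              rw [abs_mul, abs_of_nonneg hsv0]
              have := mul_le_mul_of_nonneg_right hsv (abs_nonneg u)
              linarith
      have hbound : 1 + |z - Real.sqrt v * u| ≤ K * (2 + u ^ 2) := by
        have hu : |u| ≤ 2 + u ^ 2 := by
          nlinarith [sq_nonneg (|u| - 1), sq_abs u, abs_nonneg u]
        have hε0 : 0 ≤ Real.sqrt ε := Real.sqrt_nonneg ε
        nlinarith [abs_nonneg z, sq_nonneg u]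
      calc ‖stdGauss u * w (z - Real.sqrt v * u)‖
          = stdGauss u * |w (z - Real.sqrt v * u)| := by
            rw [Real.norm_eq_abs, abs_mul, abs_of_nonneg (stdGauss_nonneg u)]
        _ ≤ stdGauss u * (C * (1 + |z - Real.sqrt v * u|) ^ m) :=
            mul_le_mul_of_nonneg_left (hgrow _) (stdGauss_nonneg u)
        _ ≤ stdGauss u * (C * (K * (2 + u ^ 2)) ^ m) := by
            have h0 : (0:ℝ) ≤ 1 + |z - Real.sqrt v * u| := by positivity
            gcongr
            exact stdGauss_nonneg u
        _ = G u := by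
            unfold stdGauss
            rw [hG, mul_pow]
            ring
    · refine Eventually.of_forall fun u => ?_
      have h1 : Tendsto (fun v : ℝ => z - Real.sqrt v * u) (𝓝 0) (𝓝 z) := by
        have : Tendsto (fun v : ℝ => z - Real.sqrt v * u) (𝓝 0)
            (𝓝 (z - Real.sqrt 0 * u)) :=
          (continuous_const.sub (Real.continuous_sqrt.mul continuous_const)).tendsto 0
        simpa using this
      exact ((hw.tendsto z).comp (h1.mono_left nhdsWithin_le_nhds)).const_mul _
  have h2 : Tendsto (fun v => ∫ u, stdGauss u * w (z - Real.sqrt v * u)) l (𝓝 0) := by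
    have : ∀ᶠ v in l, (∫ u, stdGauss u * w (z - Real.sqrt v * u)) = 0 := by
      filter_upwards [self_mem_nhdsWithin] with v hv
      rw [← conv_eq w z hv.1]
      exact hzero z v hv
    exact Tendsto.congr' (this.mono fun v h => h.symm) tendsto_const_nhds
  exact tendsto_nhds_unique h1 h2
end

section
/- Let T > 0 and let K : [0,T]² → ℝ be a Volterra kernel satisfying (H1) and (H2). Let φ, ψ : [0,T] → ℝ be bounded measurable functions. Define (K_T^*φ)_t = ∫_t^T φ(r)·(∂K/∂r)(r,t) dr and, for r ≠ s, φ₀(r,s) = ∫_0^{min(r,s)} (∂K/∂r)(r,t)·(∂K/∂s)(s,t) dt. Then all the integrals involved converge absolutely and ∫_0^T (K_T^*φ)_t·(K_T^*ψ)_t dt = ∫_0^T ∫_0^T φ₀(r,s)·φ(r)·ψ(s) ds dr. -/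
open MeasureTheory Set intervalIntegral

namespace Stmt12Aux

lemma ae_ne (a : ℝ) : ∀ᵐ x : ℝ ∂(volume : Measure ℝ), x ≠ a := by
  rw [MeasureTheory.ae_iff]
  simp only [not_not]
  have h : {x : ℝ | x = a} = {a} := Set.setOf_eq_eq_singleton
  rw [h]
  exact measure_singleton a

lemma rpow_intOn {p a b : ℝ} (hp : -1 < p) (hab : a ≤ b) :
    IntegrableOn (fun x : ℝ => x ^ p) (Ioc a b) volume :=
  (intervalIntegrable_iff_integrableOn_Ioc_of_le hab).1
    (intervalIntegral.intervalIntegrable_rpow' hp)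

lemma rpow_sub_left_intOn (r : ℝ) {p a b : ℝ} (hp : -1 < p) (hab : a ≤ b) :
    IntegrableOn (fun t : ℝ => (r - t) ^ p) (Ioc a b) volume := by
  have h := (intervalIntegral.intervalIntegrable_rpow' hp
    (a := r - a) (b := r - b)).comp_sub_left r
  simp only [sub_sub_cancel] at h
  exact (intervalIntegrable_iff_integrableOn_Ioc_of_le hab).1 h

lemma rpow_sub_right_intOn (r : ℝ) {p a b : ℝ} (hp : -1 < p) (hab : a ≤ b) :
    IntegrableOn (fun t : ℝ => (t - r) ^ p) (Ioc a b) volume := by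
  have h := (intervalIntegral.intervalIntegrable_rpow' hp
    (a := a - r) (b := b - r)).comp_sub_right r
  simp only [sub_add_cancel] at h
  exact (intervalIntegrable_iff_integrableOn_Ioc_of_le hab).1 h

lemma rpow_val {p : ℝ} (hp : -1 < p) {b : ℝ} (hb : 0 ≤ b) :
    ∫ x in Ioc (0:ℝ) b, x ^ p = b ^ (p + 1) / (p + 1) := by
  rw [← intervalIntegral.integral_of_le hb, integral_rpow (Or.inl hp),
    Real.zero_rpow (by linarith), sub_zero]

lemma rpow_sub_left_val (r : ℝ) {p : ℝ} (hp : -1 < p) {a : ℝ} (ha : a ≤ r) :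
    ∫ t in Ioc a r, (r - t) ^ p = (r - a) ^ (p + 1) / (p + 1) := by
  rw [← intervalIntegral.integral_of_le ha,
    intervalIntegral.integral_comp_sub_left (fun u : ℝ => u ^ p) r, sub_self,
    integral_rpow (Or.inl hp), Real.zero_rpow (by linarith), sub_zero]

lemma rpow_sub_right_val (r : ℝ) {p : ℝ} (hp : -1 < p) {b : ℝ} (hb : r ≤ b) :
    ∫ t in Ioc r b, (t - r) ^ p = (b - r) ^ (p + 1) / (p + 1) := by
  rw [← intervalIntegral.integral_of_le hb,
    intervalIntegral.integral_comp_sub_right (fun u : ℝ => u ^ p) r, sub_self,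
    integral_rpow (Or.inl hp), Real.zero_rpow (by linarith), sub_zero]

end Stmt12Aux

open Stmt12Aux

set_option maxHeartbeats 1000000 in
/-- the isometry-type identity
`∫_0^T (K_T^*φ)_t (K_T^*ψ)_t dt = ∫_0^T ∫_0^T φ₀(r,s) φ(r) ψ(s) ds dr`
for bounded measurable `φ, ψ`, where `φ₀(r,s) = ∫_0^{min(r,s)} K'(r,t) K'(s,t) dt`,
together with the absolute convergence of all the integrals involved. -/
theorem stmt12 (T : ℝ) (hT : 0 < T)
    (K K' : ℝ → ℝ → ℝ)
    -- Volterra kernel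
    (hVolterra : ∀ t s : ℝ, t < s → K t s = 0)
    -- (H1)
    (hKcont : ContinuousOn (fun p : ℝ × ℝ => K p.1 p.2)
      {p : ℝ × ℝ | 0 < p.2 ∧ p.2 ≤ p.1 ∧ p.1 < T})
    (hK' : ∀ s t : ℝ, 0 < s → s < t → t < T → HasDerivAt (fun r => K r s) (K' t s) t)
    (hK'cont : ContinuousOn (fun p : ℝ × ℝ => K' p.1 p.2)
      {p : ℝ × ℝ | 0 < p.2 ∧ p.2 < p.1 ∧ p.1 < T})
    -- (H2)
    (α β c : ℝ) (hα : α ∈ Ioo (0:ℝ) (1/2)) (hβ : β ∈ Ioo (0:ℝ) (1/2)) (hc : 0 < c)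
    (hH2 : ∀ s t : ℝ, 0 < s → s < t → t < T →
      |K' t s| ≤ c * (t - s) ^ (α - 1) * (t / s) ^ β)
    -- bounded measurable φ, ψ
    (φ ψ : ℝ → ℝ) (hφm : Measurable φ) (hψm : Measurable ψ)
    (Cφ Cψ : ℝ) (hφb : ∀ r, |φ r| ≤ Cφ) (hψb : ∀ r, |ψ r| ≤ Cψ)
    -- the operator K_T^* and the kernel φ₀
    (Kφ Kψ : ℝ → ℝ) (φ₀ : ℝ → ℝ → ℝ)
    (hKφ : ∀ t, Kφ t = ∫ r in t..T, φ r * K' r t)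
    (hKψ : ∀ t, Kψ t = ∫ r in t..T, ψ r * K' r t)
    (hφ₀ : ∀ r s, φ₀ r s = ∫ t in (0:ℝ)..min r s, K' r t * K' s t) :
    (∀ t ∈ Ioo (0:ℝ) T, IntervalIntegrable (fun r => φ r * K' r t) volume t T)
    ∧ (∀ t ∈ Ioo (0:ℝ) T, IntervalIntegrable (fun r => ψ r * K' r t) volume t T)
    ∧ (∀ r ∈ Ioo (0:ℝ) T, ∀ s ∈ Ioo (0:ℝ) T, r ≠ s →
        IntervalIntegrable (fun t => K' r t * K' s t) volume 0 (min r s))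
    ∧ IntervalIntegrable (fun t => Kφ t * Kψ t) volume 0 T
    ∧ IntegrableOn (fun p : ℝ × ℝ => φ₀ p.1 p.2 * φ p.1 * ψ p.2)
        (Ioc 0 T ×ˢ Ioc 0 T) (volume.prod volume)
    ∧ ∫ t in (0:ℝ)..T, Kφ t * Kψ t
        = ∫ r in (0:ℝ)..T, ∫ s in (0:ℝ)..T, φ₀ r s * φ r * ψ s := by
  obtain ⟨hα0, hα2⟩ := hα
  obtain ⟨hβ0, hβ2⟩ := hβ
  have hα1 : (-1:ℝ) < α - 1 := by linarith
  have hα1' : α - 1 ≤ 0 := by linarith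
  have hγ : (-1:ℝ) < α - 2*β := by linarith
  have h2β : (-1:ℝ) < -(2*β) := by linarith
  have h2β' : -(2*β) ≤ 0 := by linarith
  have h12β : (0:ℝ) < 1 - 2*β := by linarith
  have hCφ0 : 0 ≤ Cφ := le_trans (abs_nonneg _) (hφb 0)
  have hCψ0 : 0 ≤ Cψ := le_trans (abs_nonneg _) (hψb 0)
  -- the truncated kernel g
  set U : Set (ℝ × ℝ) := {p : ℝ × ℝ | 0 < p.2 ∧ p.2 < p.1 ∧ p.1 < T} with hUdef
  have hUmeas : MeasurableSet U := by
    have : IsOpen U := by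
      apply IsOpen.inter (isOpen_lt continuous_const continuous_snd)
      exact (isOpen_lt continuous_snd continuous_fst).inter
        (isOpen_lt continuous_fst continuous_const)
    exact this.measurableSet
  set g : ℝ → ℝ → ℝ := fun r t => U.indicator (fun p : ℝ × ℝ => K' p.1 p.2) (r, t) with hgdef
  have hg_eq : ∀ {r t : ℝ}, 0 < t → t < r → r < T → g r t = K' r t := by
    intro r t h1 h2 h3
    exact Set.indicator_of_mem (show (r, t) ∈ U from ⟨h1, h2, h3⟩) _
  have hg0 : ∀ {r t : ℝ}, ¬(0 < t ∧ t < r ∧ r < T) → g r t = 0 := by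
    intro r t h
    exact Set.indicator_of_notMem (show (r, t) ∉ U from h) (fun p : ℝ × ℝ => K' p.1 p.2)
  have hgm : Measurable (fun p : ℝ × ℝ => g p.1 p.2) := by
    have h1 : (fun p : ℝ × ℝ => g p.1 p.2) = U.indicator (fun p : ℝ × ℝ => K' p.1 p.2) := by
      funext p; simp only [hgdef]
    rw [h1]
    classical
    rw [← Set.piecewise_eq_indicator]
    exact ContinuousOn.measurable_piecewise hK'cont continuousOn_const hUmeas
  -- pointwise H2 bound reformulated
  have hKbd : ∀ {r t : ℝ}, 0 < t → t < r → r < T →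
      |K' r t| ≤ c * T ^ β * t ^ (-β) * (r - t) ^ (α - 1) := by
    intro r t h1 h2 h3
    have hrt0 : (0:ℝ) ≤ r - t := by linarith
    calc |K' r t| ≤ c * (r - t) ^ (α - 1) * (r / t) ^ β := hH2 t r h1 h2 h3
      _ ≤ c * (r - t) ^ (α - 1) * (T / t) ^ β := by
          apply mul_le_mul_of_nonneg_left _ (mul_nonneg hc.le (Real.rpow_nonneg hrt0 _))
          exact Real.rpow_le_rpow (le_of_lt (div_pos (lt_trans h1 h2) h1))
            (div_le_div_of_nonneg_right h3.le h1.le) hβ0.le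
      _ = c * T ^ β * t ^ (-β) * (r - t) ^ (α - 1) := by
          rw [Real.div_rpow hT.le h1.le, Real.rpow_neg h1.le]
          ring
  -- Part 1 generic: integrability of r ↦ χ r * K' r t on (t, T)
  have keyA : ∀ (χ : ℝ → ℝ) (C : ℝ), Measurable χ → (∀ x, |χ x| ≤ C) →
      ∀ t : ℝ, 0 < t → t < T → IntegrableOn (fun r => χ r * K' r t) (Ioc t T) volume := by
    intro χ C hχm hχb t ht0 htT
    rw [integrableOn_Ioc_iff_integrableOn_Ioo]
    have hbint : IntegrableOn
        (fun r => C * (c * T ^ β * t ^ (-β)) * (r - t) ^ (α - 1)) (Ioo t T) volume := by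
      exact IntegrableOn.mono_set
        ((rpow_sub_right_intOn t hα1 htT.le).const_mul _) Ioo_subset_Ioc_self
    have hsm : AEStronglyMeasurable (fun r => χ r * K' r t)
        (volume.restrict (Ioo t T)) := by
      have hcont : ContinuousOn (fun r => K' r t) (Ioo t T) := by
        have hmap : MapsTo (fun r => (r, t)) (Ioo t T) U := by
          intro r hr; exact ⟨ht0, hr.1, hr.2⟩
        exact hK'cont.comp ((continuous_id.prodMk continuous_const).continuousOn) hmap
      exact (hχm.aemeasurable.mul
        (hcont.aemeasurable measurableSet_Ioo)).aestronglyMeasurable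
    apply Integrable.mono' hbint hsm
    filter_upwards [ae_restrict_mem measurableSet_Ioo] with r hr
    rw [Real.norm_eq_abs, abs_mul]
    have h2 := hKbd ht0 hr.1 hr.2
    calc |χ r| * |K' r t| ≤ C * (c * T ^ β * t ^ (-β) * (r - t) ^ (α - 1)) := by
          apply mul_le_mul (hχb r) h2 (abs_nonneg _)
          exact le_trans (abs_nonneg _) (hχb r)
      _ = C * (c * T ^ β * t ^ (-β)) * (r - t) ^ (α - 1) := by ring
  -- Part 1 bound on the integral
  have keyB : ∀ (χ : ℝ → ℝ) (C : ℝ) (Kχ : ℝ → ℝ), (∀ x, |χ x| ≤ C) →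
      (∀ u, Kχ u = ∫ r in u..T, χ r * K' r u) →
      ∀ t : ℝ, 0 < t → t < T →
      |Kχ t| ≤ C * (c * T ^ β * (T ^ α / α)) * t ^ (-β) := by
    intro χ C Kχ hχb hKχ t ht0 htT
    have hC0 : 0 ≤ C := le_trans (abs_nonneg _) (hχb 0)
    have hb : IntervalIntegrable
        (fun r => C * (c * T ^ β * t ^ (-β)) * (r - t) ^ (α - 1)) volume t T := by
      rw [intervalIntegrable_iff_integrableOn_Ioc_of_le htT.le]
      exact ((rpow_sub_right_intOn t hα1 htT.le)).const_mul _
    have h1 : |Kχ t| ≤ |∫ r in t..T, C * (c * T ^ β * t ^ (-β)) * (r - t) ^ (α - 1)| := by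
      rw [hKχ t, ← Real.norm_eq_abs]
      apply intervalIntegral.norm_integral_le_abs_of_norm_le _ hb
      have huIoc : uIoc t T = Ioc t T := uIoc_of_le htT.le
      rw [huIoc]
      filter_upwards [ae_restrict_mem measurableSet_Ioc, ae_restrict_of_ae (ae_ne T)]
        with r hr hrT
      rw [Real.norm_eq_abs, abs_mul]
      calc |χ r| * |K' r t| ≤ C * (c * T ^ β * t ^ (-β) * (r - t) ^ (α - 1)) :=
            mul_le_mul (hχb r) (hKbd ht0 hr.1 (lt_of_le_of_ne hr.2 hrT)) (abs_nonneg _) hC0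
        _ = C * (c * T ^ β * t ^ (-β)) * (r - t) ^ (α - 1) := by ring
    have h2 : (∫ r in t..T, C * (c * T ^ β * t ^ (-β)) * (r - t) ^ (α - 1))
        = C * (c * T ^ β * t ^ (-β)) * ((T - t) ^ α / α) := by
      rw [intervalIntegral.integral_const_mul, intervalIntegral.integral_of_le htT.le,
        rpow_sub_right_val t hα1 htT.le, show α - 1 + 1 = α by ring]
    rw [h2] at h1
    have hk0 : 0 ≤ C * (c * T ^ β * t ^ (-β)) :=
      mul_nonneg hC0 (mul_nonneg (mul_nonneg hc.le (Real.rpow_nonneg hT.le β))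
        (Real.rpow_nonneg ht0.le _))
    have h3 : (T - t) ^ α ≤ T ^ α :=
      Real.rpow_le_rpow (by linarith) (by linarith) hα0.le
    calc |Kχ t| ≤ C * (c * T ^ β * t ^ (-β)) * ((T - t) ^ α / α) := by
          rwa [abs_of_nonneg (mul_nonneg hk0 (div_nonneg (Real.rpow_nonneg (by linarith) _) hα0.le))] at h1
      _ ≤ C * (c * T ^ β * t ^ (-β)) * (T ^ α / α) :=
          mul_le_mul_of_nonneg_left (div_le_div_of_nonneg_right h3 hα0.le) hk0
      _ = C * (c * T ^ β * (T ^ α / α)) * t ^ (-β) := by ring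
  -- constant for the φ₀ bound
  set D : ℝ := c ^ 2 * T ^ (2*β) * (2:ℝ) ^ (2*β - α) * (1/(1-2*β) + 1/α) with hDdef
  have hD0 : 0 < D := by
    apply mul_pos (mul_pos (mul_pos (pow_pos hc 2) (Real.rpow_pos_of_pos hT _))
      (Real.rpow_pos_of_pos two_pos _))
    exact add_pos (by positivity) (by positivity)
  -- the key diagonal estimate, ordered version
  have keyC : ∀ r s : ℝ, 0 < r → r < s → s < T →
      IntegrableOn (fun t => K' r t * K' s t) (Ioo 0 r) volume ∧
      ∫ t in Ioo 0 r, |K' r t * K' s t| ≤ D * ((s - r) ^ (α - 1) * r ^ (α - 2*β)) := by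
    intro r s hr0 hrs hsT
    have hrT : r < T := lt_trans hrs hsT
    set x : ℝ := r / 2 with hxdef
    have hx0 : 0 < x := by positivity
    have hxr : x < r := by simp only [hxdef]; linarith
    set cb : ℝ := c ^ 2 * T ^ (2*β) * (s - r) ^ (α - 1) with hcbdef
    have hcb0 : 0 ≤ cb :=
      mul_nonneg (mul_nonneg (by positivity) (Real.rpow_nonneg hT.le _))
        (Real.rpow_nonneg (by linarith) _)
    set h : ℝ → ℝ := fun t => (r - t) ^ (α - 1) * t ^ (-(2*β)) with hhdef
    have hh0 : ∀ t ∈ Ioo (0:ℝ) r, 0 ≤ h t := by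
      intro t ht
      exact mul_nonneg (Real.rpow_nonneg (by linarith [ht.2]) _) (Real.rpow_nonneg ht.1.le _)
    -- pointwise bound
    have hpb : ∀ t ∈ Ioo (0:ℝ) r, |K' r t * K' s t| ≤ cb * h t := by
      intro t ht
      have h1 := hKbd ht.1 ht.2 hrT
      have h2 : |K' s t| ≤ c * T ^ β * t ^ (-β) * (s - r) ^ (α - 1) := by
        refine le_trans (hKbd ht.1 (lt_trans ht.2 hrs) hsT) ?_
        apply mul_le_mul_of_nonneg_left _
          (mul_nonneg (mul_nonneg hc.le (Real.rpow_nonneg hT.le _)) (Real.rpow_nonneg ht.1.le _))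
        exact Real.rpow_le_rpow_of_nonpos (by linarith) (by linarith [ht.2]) hα1'
      rw [abs_mul]
      calc |K' r t| * |K' s t|
          ≤ (c * T ^ β * t ^ (-β) * (r - t) ^ (α - 1)) *
            (c * T ^ β * t ^ (-β) * (s - r) ^ (α - 1)) :=
            mul_le_mul h1 h2 (abs_nonneg _)
              (mul_nonneg (mul_nonneg (mul_nonneg hc.le (Real.rpow_nonneg hT.le _))
                (Real.rpow_nonneg ht.1.le _)) (Real.rpow_nonneg (by linarith [ht.2]) _))
        _ = cb * h t := by
            simp only [hcbdef, hhdef]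
            rw [show (2:ℝ)*β = β + β by ring, Real.rpow_add hT, show -(β+β) = -β + -β by ring,
              Real.rpow_add ht.1, sq]
            ring
    -- integrability of h on the two pieces
    have hI1 : IntegrableOn h (Ioc 0 x) volume := by
      apply Integrable.mono' ((rpow_intOn h2β hx0.le).const_mul (x ^ (α-1)))
      · apply AEStronglyMeasurable.mul
        · apply ((ContinuousOn.rpow_const _ _).aemeasurable measurableSet_Ioc).aestronglyMeasurable
          · exact (continuous_const.sub continuous_id).continuousOn
          · intro t ht
            left
            have : t ≤ x := ht.2
            intro hrt
            have : r - t = 0 := hrt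
            linarith
        · apply ((ContinuousOn.rpow_const continuousOn_id _).aemeasurable
            measurableSet_Ioc).aestronglyMeasurable
          intro t ht; exact Or.inl (ne_of_gt ht.1)
      · filter_upwards [ae_restrict_mem measurableSet_Ioc] with t ht
        have htr : t ≤ x := ht.2
        rw [Real.norm_eq_abs, abs_of_nonneg (mul_nonneg (Real.rpow_nonneg (by linarith) _)
          (Real.rpow_nonneg ht.1.le _))]
        apply mul_le_mul_of_nonneg_right _ (Real.rpow_nonneg ht.1.le _)
        exact Real.rpow_le_rpow_of_nonpos hx0 (by linarith) hα1'
    have hV1 : ∫ t in Ioc 0 x, h t ≤ x ^ (α - 1) * (x ^ (1-2*β) / (1-2*β)) := by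
      refine le_trans (setIntegral_mono_on hI1
        ((rpow_intOn h2β hx0.le).const_mul (x ^ (α-1))) measurableSet_Ioc ?_) ?_
      · intro t ht
        apply mul_le_mul_of_nonneg_right _ (Real.rpow_nonneg ht.1.le _)
        exact Real.rpow_le_rpow_of_nonpos hx0 (by linarith [ht.2]) hα1'
      · rw [MeasureTheory.integral_const_mul, rpow_val h2β hx0.le,
          show -(2*β) + 1 = 1 - 2*β by ring]
    have hI2 : IntegrableOn h (Ioo x r) volume := by
      apply Integrable.mono' (IntegrableOn.mono_set
        ((rpow_sub_left_intOn r hα1 hxr.le).mul_const (x ^ (-(2*β)))) Ioo_subset_Ioc_self)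
      · apply AEStronglyMeasurable.mul
        · apply ((ContinuousOn.rpow_const _ _).aemeasurable measurableSet_Ioo).aestronglyMeasurable
          · exact (continuous_const.sub continuous_id).continuousOn
          · intro t ht
            left
            intro hrt
            have : r - t = 0 := hrt
            have := ht.2
            linarith
        · apply ((ContinuousOn.rpow_const continuousOn_id _).aemeasurable
            measurableSet_Ioo).aestronglyMeasurable
          intro t ht; exact Or.inl (ne_of_gt (lt_trans hx0 ht.1))
      · filter_upwards [ae_restrict_mem measurableSet_Ioo] with t ht
        rw [Real.norm_eq_abs, abs_of_nonneg (mul_nonneg (Real.rpow_nonneg (by linarith [ht.2]) _)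
          (Real.rpow_nonneg (le_of_lt (lt_trans hx0 ht.1)) _))]
        apply mul_le_mul_of_nonneg_left _ (Real.rpow_nonneg (by linarith [ht.2]) _)
        exact Real.rpow_le_rpow_of_nonpos hx0 ht.1.le h2β'
    have hV2 : ∫ t in Ioo x r, h t ≤ (x ^ α / α) * x ^ (-(2*β)) := by
      refine le_trans (setIntegral_mono_on hI2
        (IntegrableOn.mono_set ((rpow_sub_left_intOn r hα1 hxr.le).mul_const
          (x ^ (-(2*β)))) Ioo_subset_Ioc_self) measurableSet_Ioo ?_) ?_
      · intro t ht
        apply mul_le_mul_of_nonneg_left _ (Real.rpow_nonneg (by linarith [ht.2]) _)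
        exact Real.rpow_le_rpow_of_nonpos hx0 ht.1.le h2β'
      · rw [← MeasureTheory.integral_Ioc_eq_integral_Ioo, MeasureTheory.integral_mul_const,
          rpow_sub_left_val r hα1 hxr.le,
          show α - 1 + 1 = α by ring, show r - x = x by simp only [hxdef]; ring]
    -- exponent algebra : x ^ γ pieces
    have hxval : x ^ (α - 1) * (x ^ (1-2*β) / (1-2*β)) + (x ^ α / α) * x ^ (-(2*β))
        = x ^ (α - 2*β) * (1/(1-2*β) + 1/α) := by
      have e1 : x ^ (α - 1) * x ^ (1-2*β) = x ^ (α - 2*β) := by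
        rw [← Real.rpow_add hx0, show α - 1 + (1-2*β) = α - 2*β by ring]
      have e2 : x ^ α * x ^ (-(2*β)) = x ^ (α - 2*β) := by
        rw [← Real.rpow_add hx0, show α + -(2*β) = α - 2*β by ring]
      calc x ^ (α - 1) * (x ^ (1-2*β) / (1-2*β)) + (x ^ α / α) * x ^ (-(2*β))
          = x ^ (α - 1) * x ^ (1-2*β) * (1/(1-2*β)) + x ^ α * x ^ (-(2*β)) * (1/α) := by ring
        _ = x ^ (α - 2*β) * (1/(1-2*β) + 1/α) := by rw [e1, e2]; ring
    have hxγ : x ^ (α - 2*β) = r ^ (α - 2*β) * (2:ℝ) ^ (2*β - α) := by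
      rw [hxdef, Real.div_rpow hr0.le (by norm_num : (0:ℝ) ≤ 2), div_eq_mul_inv,
        ← Real.rpow_neg (by norm_num : (0:ℝ) ≤ 2), show -(α - 2*β) = 2*β - α by ring]
    -- assemble
    have hsplit : Ioc (0:ℝ) x ∪ Ioo x r = Ioo 0 r := Ioc_union_Ioo_eq_Ioo hx0.le hxr
    have hdisj : Disjoint (Ioc (0:ℝ) x) (Ioo x r) := by
      apply Set.disjoint_left.2
      intro t ht1 ht2
      exact absurd ht2.1 (not_lt.2 ht1.2)
    have hhint : IntegrableOn h (Ioo 0 r) volume := by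
      rw [← hsplit]; exact hI1.union hI2
    have hKKsm : AEStronglyMeasurable (fun t => K' r t * K' s t)
        (volume.restrict (Ioo 0 r)) := by
      have hc1 : ContinuousOn (fun t => K' r t) (Ioo 0 r) := by
        have hmap : MapsTo (fun t => (r, t)) (Ioo 0 r) U := fun t ht => ⟨ht.1, ht.2, hrT⟩
        exact hK'cont.comp ((continuous_const.prodMk continuous_id).continuousOn) hmap
      have hc2 : ContinuousOn (fun t => K' s t) (Ioo 0 r) := by
        have hmap : MapsTo (fun t => (s, t)) (Ioo 0 r) U :=
          fun t ht => ⟨ht.1, lt_trans ht.2 hrs, hsT⟩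
        exact hK'cont.comp ((continuous_const.prodMk continuous_id).continuousOn) hmap
      exact ((hc1.aemeasurable measurableSet_Ioo).mul
        (hc2.aemeasurable measurableSet_Ioo)).aestronglyMeasurable
    have hint : IntegrableOn (fun t => K' r t * K' s t) (Ioo 0 r) volume := by
      apply Integrable.mono' (hhint.const_mul cb) hKKsm
      filter_upwards [ae_restrict_mem measurableSet_Ioo] with t ht
      rw [Real.norm_eq_abs]
      exact hpb t ht
    refine ⟨hint, ?_⟩
    have habs_int : IntegrableOn (fun t => |K' r t * K' s t|) (Ioo 0 r) volume := hint.abs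
    calc ∫ t in Ioo 0 r, |K' r t * K' s t|
        ≤ ∫ t in Ioo 0 r, cb * h t := by
          apply setIntegral_mono_on habs_int (hhint.const_mul cb) measurableSet_Ioo
          intro t ht; exact hpb t ht
      _ = cb * ((∫ t in Ioc 0 x, h t) + ∫ t in Ioo x r, h t) := by
          rw [MeasureTheory.integral_const_mul]
          congr 1
          rw [← hsplit, setIntegral_union hdisj measurableSet_Ioo hI1 hI2]
      _ ≤ cb * (x ^ (α - 1) * (x ^ (1-2*β) / (1-2*β)) + (x ^ α / α) * x ^ (-(2*β))) := by
          apply mul_le_mul_of_nonneg_left _ hcb0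
          exact add_le_add hV1 hV2
      _ = cb * (x ^ (α - 2*β) * (1/(1-2*β) + 1/α)) := by rw [hxval]
      _ = D * ((s - r) ^ (α - 1) * r ^ (α - 2*β)) := by
          rw [hxγ, hcbdef, hDdef]; ring
  -- symmetric version
  have keyC' : ∀ r s : ℝ, r ∈ Ioo (0:ℝ) T → s ∈ Ioo (0:ℝ) T → r ≠ s →
      IntegrableOn (fun t => K' r t * K' s t) (Ioo 0 (min r s)) volume ∧
      ∫ t in Ioo 0 (min r s), |K' r t * K' s t| ≤
        D * (|r - s| ^ (α - 1) * (min r s) ^ (α - 2*β)) := by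
    intro r s hr hs hrs
    rcases lt_or_gt_of_ne hrs with h | h
    · have := keyC r s hr.1 h hs.2
      rw [min_eq_left h.le]
      rw [show |r - s| = s - r by rw [abs_sub_comm]; exact abs_of_pos (by linarith)]
      exact this
    · have h2 := keyC s r hs.1 h hr.2
      rw [min_eq_right h.le]
      rw [show |r - s| = r - s from abs_of_pos (by linarith)]
      have hfe : (fun t => K' r t * K' s t) = (fun t => K' s t * K' r t) := by
        funext t; ring
      have hfe2 : (fun t => |K' r t * K' s t|) = (fun t => |K' s t * K' r t|) := by
        funext t; rw [abs_mul, abs_mul]; ring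
      rw [hfe, show (fun t => |K' r t * K' s t|) = (fun t => |K' s t * K' r t|) from hfe2]
      exact h2
  -- support and values of the product of truncated kernels
  have hgsupp : ∀ r s : ℝ, Function.support (fun t => g r t * g s t) ⊆ Ioo 0 (min r s) := by
    intro r s t ht
    simp only [Function.mem_support] at ht
    have h1 : g r t ≠ 0 := fun h => ht (by rw [h, zero_mul])
    have h2 : g s t ≠ 0 := fun h => ht (by rw [h, mul_zero])
    have hr : 0 < t ∧ t < r ∧ r < T := by by_contra hcon; exact h1 (hg0 hcon)
    have hs : 0 < t ∧ t < s ∧ s < T := by by_contra hcon; exact h2 (hg0 hcon)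
    exact ⟨hr.1, lt_min hr.2.1 hs.2.1⟩
  have hgprod_eq : ∀ r s : ℝ, r < T → s < T → ∀ t ∈ Ioo (0:ℝ) (min r s),
      g r t * g s t = K' r t * K' s t := by
    intro r s hrT hsT t ht
    have h1 : t < r := lt_of_lt_of_le ht.2 (min_le_left r s)
    have h2 : t < s := lt_of_lt_of_le ht.2 (min_le_right r s)
    rw [hg_eq ht.1 h1 hrT, hg_eq ht.1 h2 hsT]
  have hGint : ∀ r s : ℝ, r ∈ Ioo (0:ℝ) T → s ∈ Ioo (0:ℝ) T → r ≠ s →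
      Integrable (fun t => g r t * g s t) volume := by
    intro r s hr hs hrs
    rw [← integrableOn_iff_integrable_of_support_subset (hgsupp r s)]
    exact IntegrableOn.congr_fun (keyC' r s hr hs hrs).1
      (fun t ht => (hgprod_eq r s hr.2 hs.2 t ht).symm) measurableSet_Ioo
  have hGval : ∀ r s : ℝ, r ∈ Ioo (0:ℝ) T → s ∈ Ioo (0:ℝ) T →
      (∫ t, g r t * g s t) = ∫ t in Ioo 0 (min r s), K' r t * K' s t := by
    intro r s hr hs
    have h1 : (∫ t, g r t * g s t) = ∫ t in Ioo 0 (min r s), g r t * g s t :=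
      (setIntegral_eq_integral_of_forall_compl_eq_zero
        (fun t ht => Function.notMem_support.mp (fun hsup => ht (hgsupp r s hsup)))).symm
    rw [h1]
    exact setIntegral_congr_fun measurableSet_Ioo (fun t ht => hgprod_eq r s hr.2 hs.2 t ht)
  -- the triple-variable integrand
  set Fn : (ℝ × ℝ) × ℝ → ℝ :=
    fun z => (φ z.1.1 * g z.1.1 z.2) * (ψ z.1.2 * g z.1.2 z.2) with hFndef
  have hFnm : Measurable Fn := by
    apply Measurable.mul
    · exact (hφm.comp (measurable_fst.comp measurable_fst)).mul
        (hgm.comp ((measurable_fst.comp measurable_fst).prodMk measurable_snd))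
    · exact (hψm.comp (measurable_snd.comp measurable_fst)).mul
        (hgm.comp ((measurable_snd.comp measurable_fst).prodMk measurable_snd))
  have hFnzero : ∀ z : ℝ × ℝ, ¬(z.1 ∈ Ioo (0:ℝ) T ∧ z.2 ∈ Ioo (0:ℝ) T) →
      ∀ t, Fn (z, t) = 0 := by
    intro z hz t
    rcases not_and_or.1 hz with h | h
    · have hg' : g z.1 t = 0 :=
        hg0 (fun hcon => h ⟨lt_trans hcon.1 hcon.2.1, hcon.2.2⟩)
      simp only [hFndef, hg', mul_zero, zero_mul]
    · have hg' : g z.2 t = 0 :=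
        hg0 (fun hcon => h ⟨lt_trans hcon.1 hcon.2.1, hcon.2.2⟩)
      simp only [hFndef, hg', mul_zero, zero_mul]
  have hsec : ∀ z : ℝ × ℝ, z.1 ≠ z.2 → Integrable (fun t => Fn (z, t)) volume := by
    intro z hz
    by_cases hzm : z.1 ∈ Ioo (0:ℝ) T ∧ z.2 ∈ Ioo (0:ℝ) T
    · have he : (fun t => Fn (z, t)) =
          fun t => (φ z.1 * ψ z.2) * (g z.1 t * g z.2 t) := by
        funext t; simp only [hFndef]; ring
      rw [he]
      exact (hGint z.1 z.2 hzm.1 hzm.2 hz).const_mul _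
    · have he : (fun t => Fn (z, t)) = fun _ => (0:ℝ) := funext (hFnzero z hzm)
      rw [he]
      exact integrable_zero _ _ _
  have hoffdiag : ∀ᵐ z : ℝ × ℝ ∂(volume.prod volume), z.1 ≠ z.2 := by
    rw [MeasureTheory.ae_iff]
    have hdm : MeasurableSet {z : ℝ × ℝ | z.1 = z.2} :=
      measurableSet_eq_fun measurable_fst measurable_snd
    have he : {z : ℝ × ℝ | ¬ z.1 ≠ z.2} = {z : ℝ × ℝ | z.1 = z.2} := by
      ext z; simp [not_not]
    rw [he, MeasureTheory.Measure.measure_prod_null hdm]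
    apply Filter.Eventually.of_forall
    intro x
    have hpre : Prod.mk x ⁻¹' {z : ℝ × ℝ | z.1 = z.2} = {x} := by
      ext y; simp [eq_comm]
    simp only [Pi.zero_apply, hpre]
    exact measure_singleton x
  -- the dominating functions on the square
  set SQ : Set (ℝ × ℝ) := Ioo 0 T ×ˢ Ioo 0 T with hSQdef
  have hSQm : MeasurableSet SQ := measurableSet_Ioo.prod measurableSet_Ioo
  set CC : ℝ := Cφ * Cψ * D with hCCdef
  have hCC0 : 0 ≤ CC := mul_nonneg (mul_nonneg hCφ0 hCψ0) hD0.le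
  set f₁ : ℝ × ℝ → ℝ := fun z =>
    SQ.indicator (fun z => CC * (|z.1 - z.2| ^ (α-1) * z.1 ^ (α-2*β))) z with hf1def
  set f₂ : ℝ × ℝ → ℝ := fun z =>
    SQ.indicator (fun z => CC * (|z.1 - z.2| ^ (α-1) * z.2 ^ (α-2*β))) z with hf2def
  -- integrability of |r - ·| ^ (α-1) on (0,T)
  have habs : ∀ r : ℝ, r ∈ Ioo (0:ℝ) T →
      IntegrableOn (fun s => |r - s| ^ (α-1)) (Ioo 0 T) volume ∧
      ∫ s in Ioo 0 T, |r - s| ^ (α-1) ≤ 2 * (T ^ α / α) := by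
    intro r hr
    have hsplit : Ioc (0:ℝ) r ∪ Ioo r T = Ioo 0 T := Ioc_union_Ioo_eq_Ioo hr.1.le hr.2
    have hdisj : Disjoint (Ioc (0:ℝ) r) (Ioo r T) := by
      apply Set.disjoint_left.2
      intro t ht1 ht2
      exact absurd ht2.1 (not_lt.2 ht1.2)
    have heq1 : EqOn (fun s : ℝ => (r - s) ^ (α-1)) (fun s => |r - s| ^ (α-1)) (Ioc 0 r) := by
      intro s hs
      have : (0:ℝ) ≤ r - s := by linarith [hs.2]
      simp only
      rw [abs_of_nonneg this]
    have heq2 : EqOn (fun s : ℝ => (s - r) ^ (α-1)) (fun s => |r - s| ^ (α-1)) (Ioo r T) := by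
      intro s hs
      have h0 : r - s < 0 := by linarith [hs.1]
      simp only
      rw [abs_of_neg h0, neg_sub]
    have hin1 : IntegrableOn (fun s => |r - s| ^ (α-1)) (Ioc 0 r) volume :=
      IntegrableOn.congr_fun (rpow_sub_left_intOn r hα1 hr.1.le) heq1 measurableSet_Ioc
    have hin2 : IntegrableOn (fun s => |r - s| ^ (α-1)) (Ioo r T) volume :=
      IntegrableOn.congr_fun
        (IntegrableOn.mono_set (rpow_sub_right_intOn r hα1 hr.2.le) Ioo_subset_Ioc_self)
        heq2 measurableSet_Ioo
    constructor
    · rw [← hsplit]; exact hin1.union hin2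
    · rw [← hsplit, setIntegral_union hdisj measurableSet_Ioo hin1 hin2]
      have hv1 : ∫ s in Ioc 0 r, |r - s| ^ (α-1) = r ^ α / α := by
        rw [← setIntegral_congr_fun measurableSet_Ioc heq1, rpow_sub_left_val r hα1 hr.1.le,
          sub_zero, show α - 1 + 1 = α by ring]
      have hv2 : ∫ s in Ioo r T, |r - s| ^ (α-1) = (T - r) ^ α / α := by
        rw [← setIntegral_congr_fun measurableSet_Ioo (heq2),
          ← MeasureTheory.integral_Ioc_eq_integral_Ioo, rpow_sub_right_val r hα1 hr.2.le,
          show α - 1 + 1 = α by ring]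
      rw [hv1, hv2]
      have b1 : r ^ α ≤ T ^ α := Real.rpow_le_rpow hr.1.le hr.2.le hα0.le
      have b2 : (T - r) ^ α ≤ T ^ α :=
        Real.rpow_le_rpow (by linarith [hr.2]) (by linarith [hr.1]) hα0.le
      have := div_le_div_of_nonneg_right b1 hα0.le
      have := div_le_div_of_nonneg_right b2 hα0.le
      linarith
  -- integrability of f₁ and f₂
  have hf1m : Measurable f₁ := by
    apply Measurable.indicator _ hSQm
    exact ((((measurable_fst.sub measurable_snd).abs).pow measurable_const).mul
      (measurable_fst.pow measurable_const)).const_mul CC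
  have hf1zero : ∀ r s : ℝ, r ∉ Ioo (0:ℝ) T → f₁ (r, s) = 0 := by
    intro r s hr
    exact Set.indicator_of_notMem (fun hc => hr (Set.mem_prod.1 hc).1) _
  have hf1sec_eq : ∀ r : ℝ, r ∈ Ioo (0:ℝ) T → (fun s => f₁ (r, s)) =
      (Ioo (0:ℝ) T).indicator (fun s => (CC * r ^ (α-2*β)) * |r - s| ^ (α-1)) := by
    intro r hr
    funext s
    by_cases hs : s ∈ Ioo (0:ℝ) T
    · rw [show f₁ (r, s) = CC * (|r - s| ^ (α-1) * r ^ (α-2*β)) from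
        Set.indicator_of_mem (Set.mem_prod.2 ⟨hr, hs⟩) _, Set.indicator_of_mem hs]
      ring
    · rw [show f₁ (r, s) = 0 from
        Set.indicator_of_notMem (fun hc => hs (Set.mem_prod.1 hc).2) _,
        Set.indicator_of_notMem hs]
  have hf1sec : ∀ r : ℝ, Integrable (fun s => f₁ (r, s)) volume := by
    intro r
    by_cases hr : r ∈ Ioo (0:ℝ) T
    · rw [hf1sec_eq r hr]
      exact IntegrableOn.integrable_indicator (((habs r hr).1).const_mul _) measurableSet_Ioo
    · have he : (fun s => f₁ (r, s)) = fun _ => (0:ℝ) := by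
        funext s; exact hf1zero r s hr
      rw [he]
      exact integrable_zero _ _ _
  have hf1norm : Integrable (fun r => ∫ s, ‖f₁ (r, s)‖) volume := by
    have hbnd : IntegrableOn (fun r : ℝ => CC * (2 * (T ^ α / α)) * r ^ (α-2*β))
        (Ioo 0 T) volume :=
      IntegrableOn.mono_set ((rpow_intOn hγ hT.le).const_mul _) Ioo_subset_Ioc_self
    apply Integrable.mono' (IntegrableOn.integrable_indicator hbnd measurableSet_Ioo)
    · exact (hf1m.norm.stronglyMeasurable.integral_prod_right').aestronglyMeasurable
    · apply Filter.Eventually.of_forall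
      intro r
      rw [Real.norm_eq_abs, abs_of_nonneg (integral_nonneg (fun s => norm_nonneg _))]
      by_cases hr : r ∈ Ioo (0:ℝ) T
      · rw [Set.indicator_of_mem hr]
        have hnn : 0 ≤ CC * r ^ (α-2*β) := mul_nonneg hCC0 (Real.rpow_nonneg hr.1.le _)
        calc ∫ s, ‖f₁ (r, s)‖
            = ∫ s in Ioo 0 T, (CC * r ^ (α-2*β)) * |r - s| ^ (α-1) := by
              have h1 : (fun s => ‖f₁ (r, s)‖) = (Ioo (0:ℝ) T).indicator
                  (fun s => ‖(CC * r ^ (α-2*β)) * |r - s| ^ (α-1)‖) := by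
                rw [show (fun s => ‖f₁ (r, s)‖) =
                    fun s => ‖((Ioo (0:ℝ) T).indicator
                      (fun s => (CC * r ^ (α-2*β)) * |r - s| ^ (α-1))) s‖ by
                  rw [← hf1sec_eq r hr]]
                funext s
                exact norm_indicator_eq_indicator_norm _ _
              rw [h1, MeasureTheory.integral_indicator measurableSet_Ioo]
              apply setIntegral_congr_fun measurableSet_Ioo
              intro s hs
              show ‖(CC * r ^ (α-2*β)) * |r - s| ^ (α-1)‖
                  = (CC * r ^ (α-2*β)) * |r - s| ^ (α-1)
              rw [Real.norm_eq_abs]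
              exact abs_of_nonneg (mul_nonneg hnn (Real.rpow_nonneg (abs_nonneg _) _))
          _ = (CC * r ^ (α-2*β)) * ∫ s in Ioo 0 T, |r - s| ^ (α-1) :=
              MeasureTheory.integral_const_mul _ _
          _ ≤ (CC * r ^ (α-2*β)) * (2 * (T ^ α / α)) :=
              mul_le_mul_of_nonneg_left (habs r hr).2 hnn
          _ = CC * (2 * (T ^ α / α)) * r ^ (α-2*β) := by ring
      · rw [Set.indicator_of_notMem hr]
        have h0 : (fun s => ‖f₁ (r, s)‖) = fun _ => (0:ℝ) := by
          funext s; rw [hf1zero r s hr, norm_zero]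
        rw [h0, MeasureTheory.integral_zero]
  have hf1int : Integrable f₁ (volume.prod volume) :=
    (integrable_prod_iff hf1m.aestronglyMeasurable).2
      ⟨Filter.Eventually.of_forall hf1sec, hf1norm⟩
  have hf2eq : f₂ = fun z : ℝ × ℝ => f₁ (Prod.swap z) := by
    funext z
    by_cases hz : z ∈ SQ
    · have hz' : (z.2, z.1) ∈ SQ :=
        Set.mem_prod.2 ⟨(Set.mem_prod.1 hz).2, (Set.mem_prod.1 hz).1⟩
      rw [show f₂ z = CC * (|z.1 - z.2| ^ (α-1) * z.2 ^ (α-2*β)) from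
        Set.indicator_of_mem hz _]
      rw [show f₁ (Prod.swap z) = CC * (|z.2 - z.1| ^ (α-1) * z.2 ^ (α-2*β)) from
        Set.indicator_of_mem hz' _]
      rw [abs_sub_comm]
    · have hz' : (z.2, z.1) ∉ SQ := fun hc =>
        hz (Set.mem_prod.2 ⟨(Set.mem_prod.1 hc).2, (Set.mem_prod.1 hc).1⟩)
      rw [show f₂ z = 0 from Set.indicator_of_notMem hz _,
        show f₁ (Prod.swap z) = 0 from Set.indicator_of_notMem hz' _]
  have hf2int : Integrable f₂ (volume.prod volume) := by
    rw [hf2eq]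
    exact hf1int.swap
  -- the big integrability statement
  have hFnInt : Integrable Fn ((volume.prod volume).prod volume) := by
    refine (integrable_prod_iff hFnm.aestronglyMeasurable).2 ⟨?_, ?_⟩
    · filter_upwards [hoffdiag] with z hz using hsec z hz
    · apply Integrable.mono' (hf1int.add hf2int)
        (hFnm.norm.stronglyMeasurable.integral_prod_right').aestronglyMeasurable
      filter_upwards [hoffdiag] with z hz
      rw [Pi.add_apply, Real.norm_eq_abs,
        abs_of_nonneg (integral_nonneg (fun t => norm_nonneg _))]
      by_cases hzm : z.1 ∈ Ioo (0:ℝ) T ∧ z.2 ∈ Ioo (0:ℝ) T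
      · have hm0 : 0 < min z.1 z.2 := lt_min hzm.1.1 hzm.2.1
        have hsupp : ∀ t, t ∉ Ioo (0:ℝ) (min z.1 z.2) → ‖Fn (z, t)‖ = 0 := by
          intro t ht
          have h0 : g z.1 t * g z.2 t = 0 :=
            Function.notMem_support.mp (fun hs' => ht (hgsupp z.1 z.2 hs'))
          have hFn0 : Fn (z, t) = 0 := by
            simp only [hFndef]
            rcases mul_eq_zero.1 h0 with h | h <;> rw [h] <;> ring
          rw [hFn0, norm_zero]
        calc ∫ t, ‖Fn (z, t)‖
            = ∫ t in Ioo 0 (min z.1 z.2), ‖Fn (z, t)‖ :=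
              (setIntegral_eq_integral_of_forall_compl_eq_zero hsupp).symm
          _ ≤ ∫ t in Ioo 0 (min z.1 z.2), (Cφ * Cψ) * |K' z.1 t * K' z.2 t| := by
              apply setIntegral_mono_on ((hsec z hz).norm.integrableOn)
                (((keyC' z.1 z.2 hzm.1 hzm.2 hz).1.abs).const_mul _) measurableSet_Ioo
              intro t ht
              have h1 : t < z.1 := lt_of_lt_of_le ht.2 (min_le_left _ _)
              have h2 : t < z.2 := lt_of_lt_of_le ht.2 (min_le_right _ _)
              have e : Fn (z, t) = (φ z.1 * K' z.1 t) * (ψ z.2 * K' z.2 t) := by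
                simp only [hFndef, hg_eq ht.1 h1 hzm.1.2, hg_eq ht.1 h2 hzm.2.2]
              have e2 : |(φ z.1 * K' z.1 t) * (ψ z.2 * K' z.2 t)|
                  = (|φ z.1| * |ψ z.2|) * |K' z.1 t * K' z.2 t| := by
                rw [abs_mul, abs_mul, abs_mul, abs_mul]
                ring
              rw [Real.norm_eq_abs, e, e2]
              exact mul_le_mul_of_nonneg_right
                (mul_le_mul (hφb _) (hψb _) (abs_nonneg _) hCφ0) (abs_nonneg _)
          _ = (Cφ * Cψ) * ∫ t in Ioo 0 (min z.1 z.2), |K' z.1 t * K' z.2 t| :=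
              MeasureTheory.integral_const_mul _ _
          _ ≤ (Cφ * Cψ) * (D * (|z.1 - z.2| ^ (α-1) * (min z.1 z.2) ^ (α - 2*β))) :=
              mul_le_mul_of_nonneg_left (keyC' z.1 z.2 hzm.1 hzm.2 hz).2
                (mul_nonneg hCφ0 hCψ0)
          _ ≤ f₁ z + f₂ z := by
              have hf1v : f₁ z = CC * (|z.1 - z.2| ^ (α-1) * z.1 ^ (α-2*β)) :=
                Set.indicator_of_mem (Set.mem_prod.2 ⟨hzm.1, hzm.2⟩) _
              have hf2v : f₂ z = CC * (|z.1 - z.2| ^ (α-1) * z.2 ^ (α-2*β)) :=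
                Set.indicator_of_mem (Set.mem_prod.2 ⟨hzm.1, hzm.2⟩) _
              have hmle : (min z.1 z.2) ^ (α-2*β) ≤ z.1 ^ (α-2*β) + z.2 ^ (α-2*β) := by
                rcases min_choice z.1 z.2 with h | h <;> rw [h]
                · exact le_add_of_nonneg_right (Real.rpow_nonneg hzm.2.1.le _)
                · exact le_add_of_nonneg_left (Real.rpow_nonneg hzm.1.1.le _)
              have h3 : (Cφ * Cψ) * (D * (|z.1 - z.2| ^ (α-1) * (min z.1 z.2) ^ (α - 2*β)))
                  = (CC * |z.1 - z.2| ^ (α-1)) * (min z.1 z.2) ^ (α-2*β) := by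
                rw [hCCdef]; ring
              have h4 : f₁ z + f₂ z
                  = (CC * |z.1 - z.2| ^ (α-1)) * (z.1 ^ (α-2*β) + z.2 ^ (α-2*β)) := by
                rw [hf1v, hf2v]; ring
              rw [h3, h4]
              exact mul_le_mul_of_nonneg_left hmle
                (mul_nonneg hCC0 (Real.rpow_nonneg (abs_nonneg _) _))
      · have hzSQ : z ∉ SQ := fun hc =>
          hzm ⟨(Set.mem_prod.1 hc).1, (Set.mem_prod.1 hc).2⟩
        have h0 : (fun t => ‖Fn (z, t)‖) = fun _ => (0:ℝ) := by
          funext t; rw [hFnzero z hzm t, norm_zero]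
        rw [h0, MeasureTheory.integral_zero]
        rw [show f₁ z = 0 from Set.indicator_of_notMem hzSQ _,
          show f₂ z = 0 from Set.indicator_of_notMem hzSQ _, add_zero]
  -- measurable representatives of Kφ, Kψ
  set KΦ : ℝ → ℝ := fun t => ∫ r, φ r * g r t with hKΦdef
  set KΨ : ℝ → ℝ := fun t => ∫ r, ψ r * g r t with hKΨdef
  have hKΦm : StronglyMeasurable KΦ := by
    have hm : Measurable (fun q : ℝ × ℝ => φ q.2 * g q.2 q.1) :=
      (hφm.comp measurable_snd).mul (hgm.comp (measurable_snd.prodMk measurable_fst))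
    exact hm.stronglyMeasurable.integral_prod_right'
  have hKΨm : StronglyMeasurable KΨ := by
    have hm : Measurable (fun q : ℝ × ℝ => ψ q.2 * g q.2 q.1) :=
      (hψm.comp measurable_snd).mul (hgm.comp (measurable_snd.prodMk measurable_fst))
    exact hm.stronglyMeasurable.integral_prod_right'
  -- identification of the interval integral with the full-line integral
  have claimA : ∀ (χ : ℝ → ℝ), ∀ t ∈ Ioo (0:ℝ) T,
      (∫ r in t..T, χ r * K' r t) = ∫ r, χ r * g r t := by
    intro χ t ht
    rw [intervalIntegral.integral_of_le ht.2.le, MeasureTheory.integral_Ioc_eq_integral_Ioo]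
    refine (setIntegral_congr_fun measurableSet_Ioo
      (show EqOn (fun r => χ r * K' r t) (fun r => χ r * g r t) (Ioo t T) from
        fun r hr => by
          show χ r * K' r t = χ r * g r t
          rw [hg_eq ht.1 hr.1 hr.2])).trans ?_
    exact setIntegral_eq_integral_of_forall_compl_eq_zero
      (fun r hr => by
        show χ r * g r t = 0
        rw [hg0 (fun hcon => hr ⟨hcon.2.1, hcon.2.2⟩), mul_zero])
  have hKφA : ∀ t ∈ Ioo (0:ℝ) T, Kφ t = KΦ t := fun t ht => by
    rw [hKφ t]; exact claimA φ t ht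
  have hKψA : ∀ t ∈ Ioo (0:ℝ) T, Kψ t = KΨ t := fun t ht => by
    rw [hKψ t]; exact claimA ψ t ht
  -- Parts 1-3
  have part1 : ∀ t ∈ Ioo (0:ℝ) T, IntervalIntegrable (fun r => φ r * K' r t) volume t T := by
    intro t ht
    rw [intervalIntegrable_iff_integrableOn_Ioc_of_le ht.2.le]
    exact keyA φ Cφ hφm hφb t ht.1 ht.2
  have part2 : ∀ t ∈ Ioo (0:ℝ) T, IntervalIntegrable (fun r => ψ r * K' r t) volume t T := by
    intro t ht
    rw [intervalIntegrable_iff_integrableOn_Ioc_of_le ht.2.le]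
    exact keyA ψ Cψ hψm hψb t ht.1 ht.2
  have part3 : ∀ r ∈ Ioo (0:ℝ) T, ∀ s ∈ Ioo (0:ℝ) T, r ≠ s →
      IntervalIntegrable (fun t => K' r t * K' s t) volume 0 (min r s) := by
    intro r hr s hs hrs
    rw [intervalIntegrable_iff_integrableOn_Ioc_of_le (lt_min hr.1 hs.1).le,
      integrableOn_Ioc_iff_integrableOn_Ioo]
    exact (keyC' r s hr hs hrs).1
  -- Part 4
  have part4 : IntervalIntegrable (fun t => Kφ t * Kψ t) volume 0 T := by
    rw [intervalIntegrable_iff_integrableOn_Ioc_of_le hT.le]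
    have hb : IntegrableOn (fun t : ℝ =>
        ((Cφ * (c * T ^ β * (T ^ α / α))) * (Cψ * (c * T ^ β * (T ^ α / α)))) * t ^ (-(2*β)))
        (Ioc 0 T) volume := (rpow_intOn h2β hT.le).const_mul _
    apply Integrable.mono' hb
    · apply AEStronglyMeasurable.congr ((hKΦm.mul hKΨm).aestronglyMeasurable.restrict)
      filter_upwards [ae_restrict_mem measurableSet_Ioc, ae_restrict_of_ae (ae_ne T)]
        with t ht htT
      have ht' : t ∈ Ioo 0 T := ⟨ht.1, lt_of_le_of_ne ht.2 htT⟩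
      rw [Pi.mul_apply, hKφA t ht', hKψA t ht']
    · filter_upwards [ae_restrict_mem measurableSet_Ioc, ae_restrict_of_ae (ae_ne T)]
        with t ht htT
      have ht' : t ∈ Ioo 0 T := ⟨ht.1, lt_of_le_of_ne ht.2 htT⟩
      have b1 := keyB φ Cφ Kφ hφb hKφ t ht'.1 ht'.2
      have b2 := keyB ψ Cψ Kψ hψb hKψ t ht'.1 ht'.2
      have hX0 : 0 ≤ Cφ * (c * T ^ β * (T ^ α / α)) * t ^ (-β) :=
        mul_nonneg (mul_nonneg hCφ0 (mul_nonneg (mul_nonneg hc.le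
          (Real.rpow_nonneg hT.le _)) (div_nonneg (Real.rpow_nonneg hT.le _) hα0.le)))
          (Real.rpow_nonneg ht'.1.le _)
      rw [Real.norm_eq_abs, abs_mul]
      calc |Kφ t| * |Kψ t|
          ≤ (Cφ * (c * T ^ β * (T ^ α / α)) * t ^ (-β)) *
            (Cψ * (c * T ^ β * (T ^ α / α)) * t ^ (-β)) :=
            mul_le_mul b1 b2 (abs_nonneg _) hX0
        _ = ((Cφ * (c * T ^ β * (T ^ α / α))) * (Cψ * (c * T ^ β * (T ^ α / α))))
              * (t ^ (-β) * t ^ (-β)) := by ring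
        _ = ((Cφ * (c * T ^ β * (T ^ α / α))) * (Cψ * (c * T ^ β * (T ^ α / α))))
              * t ^ (-(2*β)) := by
            rw [← Real.rpow_add ht'.1, show -β + -β = -(2*β) by ring]
  -- the function H and its properties
  set H : ℝ × ℝ → ℝ := fun z => ∫ t, Fn (z, t) with hHdef
  have hHint : Integrable H (volume.prod volume) := hFnInt.integral_prod_left
  have hHfact : ∀ z : ℝ × ℝ, H z = (φ z.1 * ψ z.2) * ∫ t, g z.1 t * g z.2 t := by
    intro z
    show (∫ t, Fn (z, t)) = _
    rw [show (fun t => Fn (z, t)) = fun t => (φ z.1 * ψ z.2) * (g z.1 t * g z.2 t) by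
      funext t; simp only [hFndef]; ring]
    exact MeasureTheory.integral_const_mul _ _
  have hHeq : ∀ r s : ℝ, r ∈ Ioo (0:ℝ) T → s ∈ Ioo (0:ℝ) T → r ≠ s →
      H (r, s) = φ₀ r s * φ r * ψ s := by
    intro r s hr hs hrs
    have hm0 : 0 < min r s := lt_min hr.1 hs.1
    rw [hHfact (r, s)]
    have h1 : (∫ t, g r t * g s t) = φ₀ r s :=
      (hGval r s hr hs).trans (by
        rw [hφ₀ r s, intervalIntegral.integral_of_le hm0.le,
          MeasureTheory.integral_Ioc_eq_integral_Ioo])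
    rw [h1]
    ring
  have hH0 : ∀ z : ℝ × ℝ, ¬(z.1 ∈ Ioo (0:ℝ) T ∧ z.2 ∈ Ioo (0:ℝ) T) → H z = 0 := by
    intro z hz
    show (∫ t, Fn (z, t)) = 0
    rw [show (fun t => Fn (z, t)) = fun _ => (0:ℝ) from funext (hFnzero z hz)]
    exact integral_zero _ _
  -- ae facts about T on the product
  have haefstT : ∀ᵐ z : ℝ × ℝ ∂(volume.prod volume), z.1 ≠ T := by
    rw [MeasureTheory.ae_iff]
    have he : {z : ℝ × ℝ | ¬ z.1 ≠ T} = ({T} : Set ℝ) ×ˢ (univ : Set ℝ) := by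
      ext z
      simp only [mem_setOf_eq, not_not, Set.mem_prod, Set.mem_singleton_iff, Set.mem_univ,
        and_true]
    rw [he, MeasureTheory.Measure.prod_prod, Real.volume_singleton, zero_mul]
  have haesndT : ∀ᵐ z : ℝ × ℝ ∂(volume.prod volume), z.2 ≠ T := by
    rw [MeasureTheory.ae_iff]
    have he : {z : ℝ × ℝ | ¬ z.2 ≠ T} = (univ : Set ℝ) ×ˢ ({T} : Set ℝ) := by
      ext z
      simp only [mem_setOf_eq, not_not, Set.mem_prod, Set.mem_singleton_iff, Set.mem_univ,
        true_and]
    rw [he, MeasureTheory.Measure.prod_prod, Real.volume_singleton, mul_zero]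
  -- Part 5
  have part5 : IntegrableOn (fun p : ℝ × ℝ => φ₀ p.1 p.2 * φ p.1 * ψ p.2)
      (Ioc 0 T ×ˢ Ioc 0 T) (volume.prod volume) := by
    apply Integrable.congr (hHint.integrableOn)
    filter_upwards [ae_restrict_mem (measurableSet_Ioc.prod measurableSet_Ioc),
      ae_restrict_of_ae hoffdiag, ae_restrict_of_ae haefstT, ae_restrict_of_ae haesndT]
      with z hzmem hzd h1T h2T
    have hz1 : z.1 ∈ Ioc (0:ℝ) T := (Set.mem_prod.1 hzmem).1
    have hz2 : z.2 ∈ Ioc (0:ℝ) T := (Set.mem_prod.1 hzmem).2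
    exact hHeq z.1 z.2 ⟨hz1.1, lt_of_le_of_ne hz1.2 h1T⟩
      ⟨hz2.1, lt_of_le_of_ne hz2.2 h2T⟩ hzd
  -- Part 6
  have part6 : ∫ t in (0:ℝ)..T, Kφ t * Kψ t
      = ∫ r in (0:ℝ)..T, ∫ s in (0:ℝ)..T, φ₀ r s * φ r * ψ s := by
    have hR1 : ∀ r : ℝ, r ∈ Ioo (0:ℝ) T →
        (∫ s in (0:ℝ)..T, φ₀ r s * φ r * ψ s) = ∫ s, H (r, s) := by
      intro r hr
      rw [intervalIntegral.integral_of_le hT.le]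
      have h1 : ∫ s in Ioc 0 T, φ₀ r s * φ r * ψ s = ∫ s in Ioc 0 T, H (r, s) := by
        apply setIntegral_congr_ae measurableSet_Ioc
        filter_upwards [ae_ne T, ae_ne r] with s hsT hsr hs
        exact (hHeq r s hr ⟨hs.1, lt_of_le_of_ne hs.2 hsT⟩ (fun h => hsr h.symm)).symm
      rw [h1]
      apply setIntegral_eq_integral_of_forall_compl_eq_zero
      intro s hs
      apply hH0
      rintro ⟨_, h2'⟩
      exact hs ⟨h2'.1, h2'.2.le⟩
    have hR2 : (∫ r in (0:ℝ)..T, ∫ s in (0:ℝ)..T, φ₀ r s * φ r * ψ s)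
        = ∫ r, ∫ s, H (r, s) := by
      rw [intervalIntegral.integral_of_le hT.le]
      have h1 : ∫ r in Ioc 0 T, (∫ s in (0:ℝ)..T, φ₀ r s * φ r * ψ s)
          = ∫ r in Ioc 0 T, ∫ s, H (r, s) := by
        apply setIntegral_congr_ae measurableSet_Ioc
        filter_upwards [ae_ne T] with r hrT hr
        exact hR1 r ⟨hr.1, lt_of_le_of_ne hr.2 hrT⟩
      rw [h1]
      apply setIntegral_eq_integral_of_forall_compl_eq_zero
      intro r hr
      have hz : (fun s => H (r, s)) = fun _ => (0:ℝ) := by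
        funext s
        apply hH0
        rintro ⟨h1', _⟩
        exact hr ⟨h1'.1, h1'.2.le⟩
      rw [hz]
      exact integral_zero _ _
    have hL1 : ∀ t : ℝ, (∫ z : ℝ × ℝ, Fn (z, t) ∂(volume.prod volume))
        = (∫ r, φ r * g r t) * ∫ s, ψ s * g s t := by
      intro t
      have he : (fun z : ℝ × ℝ => Fn (z, t))
          = fun z : ℝ × ℝ => (φ z.1 * g z.1 t) * (ψ z.2 * g z.2 t) := by
        funext z; simp only [hFndef]
      rw [he]
      exact MeasureTheory.integral_prod_mul (μ := volume) (ν := volume)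
        (fun r => φ r * g r t) (fun s => ψ s * g s t)
    have hL0 : ∀ t : ℝ, t ∉ Ioc (0:ℝ) T → ((∫ r, φ r * g r t) * ∫ s, ψ s * g s t) = 0 := by
      intro t ht
      have hg' : ∀ r : ℝ, g r t = 0 := by
        intro r; apply hg0; rintro ⟨h1, h2, h3⟩
        exact ht ⟨h1, le_of_lt (lt_trans h2 h3)⟩
      have e1 : (fun r : ℝ => φ r * g r t) = fun _ => (0:ℝ) := by
        funext r; rw [hg' r, mul_zero]
      have e2 : (fun s : ℝ => ψ s * g s t) = fun _ => (0:ℝ) := by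
        funext s; rw [hg' s, mul_zero]
      rw [e1, e2, MeasureTheory.integral_zero, mul_zero]
    calc ∫ t in (0:ℝ)..T, Kφ t * Kψ t
        = ∫ t in Ioc 0 T, Kφ t * Kψ t := intervalIntegral.integral_of_le hT.le
      _ = ∫ t in Ioc 0 T, (∫ r, φ r * g r t) * ∫ s, ψ s * g s t := by
          apply setIntegral_congr_ae measurableSet_Ioc
          filter_upwards [ae_ne T] with t htT ht
          have ht' : t ∈ Ioo 0 T := ⟨ht.1, lt_of_le_of_ne ht.2 htT⟩
          rw [hKφ t, hKψ t, claimA φ t ht', claimA ψ t ht']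
      _ = ∫ t, (∫ r, φ r * g r t) * ∫ s, ψ s * g s t :=
          setIntegral_eq_integral_of_forall_compl_eq_zero hL0
      _ = ∫ t, ∫ z : ℝ × ℝ, Fn (z, t) ∂(volume.prod volume) := by
          rw [show (fun t => (∫ r, φ r * g r t) * ∫ s, ψ s * g s t)
            = fun t => ∫ z : ℝ × ℝ, Fn (z, t) ∂(volume.prod volume) from
            funext fun t => (hL1 t).symm]
      _ = ∫ z : ℝ × ℝ, (∫ t, Fn (z, t)) ∂(volume.prod volume) :=
          (MeasureTheory.integral_integral_swap hFnInt).symm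
      _ = ∫ r, ∫ s, H (r, s) := MeasureTheory.integral_prod H hHint
      _ = ∫ r in (0:ℝ)..T, ∫ s in (0:ℝ)..T, φ₀ r s * φ r * ψ s := hR2.symm
  exact ⟨part1, part2, part3, part4, part5, part6⟩
end

section
/- Let T > 0, 0 ≤ t₀ < T, and let K : [0,T]² → ℝ be a Volterra kernel satisfying (H1) and (H2). Define K̃_{t₀}(s) = ∫_{t₀}^s (∂K/∂s)(s,u) du for s ∈ (t₀, T], and suppose K̃_{t₀}(s) ≠ 0 for all s ∈ (t₀, T]. Let Z : [t₀,T] → ℝ be continuous and suppose that for every t ∈ (t₀, T], one has ∫_u^t (∂K/∂v)(v,u)·Z(v) dv = 0 for almost every u ∈ [t₀, t]. Then Z(s) = 0 for all s ∈ [t₀, T]. -/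
open MeasureTheory Set intervalIntegral Topology Filter

/-- injectivity of the adjoint operator `K_t^*` on continuous functions
under the condition `K̃_{t₀}(s) = ∫_{t₀}^s ∂K/∂s(s,u) du ≠ 0` on `(t₀, T]`. -/
theorem stmt15 (T t₀ : ℝ) (hT : 0 < T) (ht₀ : 0 ≤ t₀) (ht₀T : t₀ < T)
    (K K' : ℝ → ℝ → ℝ)
    -- Volterra kernel
    (hVolterra : ∀ t s : ℝ, t < s → K t s = 0)
    -- (H1)
    (hKcont : ContinuousOn (fun p : ℝ × ℝ => K p.1 p.2)
      {p : ℝ × ℝ | 0 < p.2 ∧ p.2 ≤ p.1 ∧ p.1 < T})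
    (hK' : ∀ s t : ℝ, 0 < s → s < t → t < T → HasDerivAt (fun r => K r s) (K' t s) t)
    (hK'cont : ContinuousOn (fun p : ℝ × ℝ => K' p.1 p.2)
      {p : ℝ × ℝ | 0 < p.2 ∧ p.2 < p.1 ∧ p.1 < T})
    -- (H2)
    (α β c : ℝ) (hα : α ∈ Ioo (0:ℝ) (1/2)) (hβ : β ∈ Ioo (0:ℝ) (1/2)) (hc : 0 < c)
    (hH2 : ∀ s t : ℝ, 0 < s → s < t → t < T →
      |K' t s| ≤ c * (t - s) ^ (α - 1) * (t / s) ^ β)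
    -- K̃_{t₀}(s) ≠ 0 on (t₀, T]
    (hKtilde : ∀ s ∈ Ioc t₀ T, (∫ u in t₀..s, K' s u) ≠ 0)
    -- continuous Z with (K_t^* Z)_u = 0 for a.e. u, for every t
    (Z : ℝ → ℝ) (hZ : ContinuousOn Z (Icc t₀ T))
    (hzero : ∀ t ∈ Ioc t₀ T, ∀ᵐ u ∂(volume.restrict (Icc t₀ t)),
      ∫ v in u..t, K' v u * Z v = 0) :
    ∀ s ∈ Icc t₀ T, Z s = 0 := by
  obtain ⟨M, hM⟩ : ∃ M, ∀ x ∈ Icc t₀ T, ‖Z x‖ ≤ M :=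
    isCompact_Icc.exists_bound_of_continuousOn hZ
  -- continuity of the integrand on (u, T)
  have hfcont : ∀ u, t₀ < u → ContinuousOn (fun v => K' v u * Z v) (Ioo u T) := by
    intro u hu
    have hu0 : 0 < u := ht₀.trans_lt hu
    have h1 : ContinuousOn (fun v => K' v u) (Ioo u T) := by
      have hmap : ContinuousOn (fun v : ℝ => ((v, u) : ℝ × ℝ)) (Ioo u T) :=
        (continuous_id.prodMk continuous_const).continuousOn
      exact hK'cont.comp hmap (fun v hv => ⟨hu0, hv.1, hv.2⟩)
    exact h1.mul (hZ.mono (fun v hv => ⟨hu.le.trans hv.1.le, hv.2.le⟩))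
  -- interval integrability of the integrand
  have hint : ∀ u r, t₀ < u → u < r → r < T →
      IntervalIntegrable (fun v => K' v u * Z v) volume u r := by
    intro u r hu hur hrT
    have hu0 : 0 < u := ht₀.trans_lt hu
    have hβ0 : (0:ℝ) ≤ β := hβ.1.le
    have hcont : ContinuousOn (fun v => K' v u * Z v) (Ioc u r) :=
      (hfcont u hu).mono (fun v hv => ⟨hv.1, hv.2.trans_lt hrT⟩)
    rw [intervalIntegrable_iff_integrableOn_Ioc_of_le hur.le]
    have hmeas := hcont.aestronglyMeasurable (μ := volume) measurableSet_Ioc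
    have hM0 : 0 ≤ M := le_trans (norm_nonneg _) (hM u ⟨hu.le, (hur.trans hrT).le⟩)
    have hgint : IntegrableOn (fun v => (c * (r/u)^β * M) * (v - u) ^ (α - 1)) (Ioc u r) volume := by
      have h1 : IntervalIntegrable (fun x : ℝ => x ^ (α - 1)) volume 0 (r - u) :=
        intervalIntegral.intervalIntegrable_rpow' (by linarith [hα.1])
      have h2 := h1.comp_sub_right u
      simp only [zero_add, sub_add_cancel] at h2
      have h3 := h2.const_mul (c * (r/u)^β * M)
      rw [intervalIntegrable_iff_integrableOn_Ioc_of_le hur.le] at h3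
      exact h3
    refine Integrable.mono' hgint hmeas ?_
    refine (ae_restrict_iff' measurableSet_Ioc).mpr (Filter.Eventually.of_forall ?_)
    intro v hv
    have hv1 : u < v := hv.1
    have hv2 : v ≤ r := hv.2
    have hvT : v < T := lt_of_le_of_lt hv2 hrT
    have hK'b : ‖K' v u‖ ≤ c * (v - u) ^ (α - 1) * (v / u) ^ β := by
      rw [Real.norm_eq_abs]; exact hH2 u v hu0 hv1 hvT
    have hZb : ‖Z v‖ ≤ M := hM v ⟨hu.le.trans hv1.le, hv2.trans hrT.le⟩
    rw [norm_mul]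
    have hvu0 : (0:ℝ) ≤ v - u := (sub_pos.mpr hv1).le
    calc ‖K' v u‖ * ‖Z v‖ ≤ (c * (v - u) ^ (α - 1) * (v / u) ^ β) * M := by
          refine mul_le_mul hK'b hZb (norm_nonneg _) ?_
          exact mul_nonneg (mul_nonneg hc.le (Real.rpow_nonneg hvu0 _))
            (Real.rpow_nonneg (div_nonneg (by linarith) hu0.le) _)
      _ ≤ (c * (v - u) ^ (α - 1) * (r / u) ^ β) * M := by
          refine mul_le_mul_of_nonneg_right (mul_le_mul_of_nonneg_left ?_
            (mul_nonneg hc.le (Real.rpow_nonneg hvu0 _))) hM0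
          exact Real.rpow_le_rpow (div_nonneg (by linarith) hu0.le) ((div_le_div_iff_of_pos_right hu0).mpr hv2) hβ0
      _ = (c * (r/u)^β * M) * (v - u) ^ (α - 1) := by ring
  -- FTC derivative
  have hFTC : ∀ u, t₀ < u → ∀ r ∈ Ioo u T,
      HasDerivAt (fun x => ∫ v in u..x, K' v u * Z v) (K' r u * Z r) r := by
    intro u hu r hr
    exact intervalIntegral.integral_hasDerivAt_right (hint u r hu hr.1 hr.2)
      ((hfcont u hu).stronglyMeasurableAtFilter isOpen_Ioo r hr)
      ((hfcont u hu).continuousAt (Ioo_mem_nhds hr.1 hr.2))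
  -- a.e. u good for all rational times
  have hae : ∀ᵐ u : ℝ ∂volume, ∀ q : ℚ, t₀ < (q:ℝ) → (q:ℝ) ≤ T →
      u ∈ Icc t₀ (q:ℝ) → (∫ v in u..(q:ℝ), K' v u * Z v) = 0 := by
    rw [ae_all_iff]
    intro q
    by_cases hq : t₀ < (q:ℝ) ∧ (q:ℝ) ≤ T
    · have h1 := hzero (q:ℝ) ⟨hq.1, hq.2⟩
      have h2 := (ae_restrict_iff' measurableSet_Icc).mp h1
      filter_upwards [h2] with u hu _ _ h4
      exact hu h4
    · filter_upwards with u h1 h2 h3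
      exact absurd ⟨h1, h2⟩ hq
  -- main claim on the open interval
  have key : ∀ t ∈ Ioo t₀ T, Z t = 0 := by
    intro t ht
    by_contra hZt
    have hne : ∀ᵐ u : ℝ ∂volume, u ≠ t := by
      rw [ae_iff]
      simp only [not_ne_iff, setOf_eq_eq_singleton]
      exact measure_singleton t
    have hK0 : ∀ᵐ u : ℝ ∂volume, u ∈ Ioc t₀ t → K' t u = 0 := by
      filter_upwards [hae, hne] with u hu hut hmem
      have hu1 : t₀ < u := hmem.1
      have hut' : u < t := lt_of_le_of_ne hmem.2 hut
      set g : ℝ → ℝ := fun x => ∫ v in u..x, K' v u * Z v with hg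
      have hg0 : EqOn g 0 (Ioo u T) := by
        intro r hr
        have hcr : ContinuousAt g r := (hFTC u hu1 r hr).continuousAt
        have hcl : r ∈ closure (Ioo u T ∩ Set.range ((↑) : ℚ → ℝ)) :=
          Dense.open_subset_closure_inter Rat.denseRange_cast isOpen_Ioo hr
        obtain ⟨x, hx, hlim⟩ := mem_closure_iff_seq_limit.mp hcl
        have hx0 : ∀ n, g (x n) = 0 := by
          intro n
          obtain ⟨hxI, q, hq⟩ := hx n
          rw [← hq] at hxI ⊢
          exact hu q (hu1.trans hxI.1) hxI.2.le ⟨hu1.le, hxI.1.le⟩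
        have h1 : Filter.Tendsto (g ∘ x) Filter.atTop (𝓝 (g r)) := hcr.tendsto.comp hlim
        have h2 : Filter.Tendsto (fun _ : ℕ => (0:ℝ)) Filter.atTop (𝓝 (g r)) :=
          h1.congr hx0
        exact tendsto_nhds_unique h2 tendsto_const_nhds
      have hd0 : HasDerivAt g 0 t := by
        have hmem' : Ioo u T ∈ 𝓝 t := Ioo_mem_nhds hut' ht.2
        exact (hasDerivAt_const t (0:ℝ)).congr_of_eventuallyEq
          (Filter.eventuallyEq_of_mem hmem' (fun x hx => hg0 hx))
      have huniq := (hFTC u hu1 t ⟨hut', ht.2⟩).unique hd0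
      rcases mul_eq_zero.mp huniq with h | h
      · exact h
      · exact absurd h hZt
    have hzero' : (∫ u in t₀..t, K' t u) = 0 := by
      rw [intervalIntegral.integral_of_le ht.1.le]
      refine MeasureTheory.integral_eq_zero_of_ae ?_
      exact (ae_restrict_iff' measurableSet_Ioc).mpr (hK0.mono fun u h hm => h hm)
    exact hKtilde t ⟨ht.1, ht.2.le⟩ hzero'
  -- boundary points
  intro s hs
  rcases eq_or_lt_of_le hs.1 with h1 | h1
  · -- s = t₀
    have hnb : (𝓝[Ioo t₀ T] t₀).NeBot := by
      refine mem_closure_iff_nhdsWithin_neBot.mp ?_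
      rw [closure_Ioo ht₀T.ne]
      exact ⟨le_refl _, ht₀T.le⟩
    have h2 : Filter.Tendsto Z (𝓝[Ioo t₀ T] t₀) (𝓝 (Z t₀)) :=
      ((hZ t₀ ⟨le_refl _, ht₀T.le⟩).tendsto).mono_left (nhdsWithin_mono _ Ioo_subset_Icc_self)
    have h3 : Filter.Tendsto Z (𝓝[Ioo t₀ T] t₀) (𝓝 0) := by
      refine Filter.Tendsto.congr' ?_ tendsto_const_nhds
      filter_upwards [self_mem_nhdsWithin] with x hx
      exact (key x hx).symm
    rw [← h1]
    exact tendsto_nhds_unique h2 h3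
  · rcases eq_or_lt_of_le hs.2 with h2 | h2
    · -- s = T
      have hnb : (𝓝[Ioo t₀ T] T).NeBot := by
        refine mem_closure_iff_nhdsWithin_neBot.mp ?_
        rw [closure_Ioo ht₀T.ne]
        exact ⟨ht₀T.le, le_refl _⟩
      have h3 : Filter.Tendsto Z (𝓝[Ioo t₀ T] T) (𝓝 (Z T)) :=
        ((hZ T ⟨ht₀T.le, le_refl _⟩).tendsto).mono_left (nhdsWithin_mono _ Ioo_subset_Icc_self)
      have h4 : Filter.Tendsto Z (𝓝[Ioo t₀ T] T) (𝓝 0) := by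
        refine Filter.Tendsto.congr' ?_ tendsto_const_nhds
        filter_upwards [self_mem_nhdsWithin] with x hx
        exact (key x hx).symm
      rw [h2]
      exact tendsto_nhds_unique h3 h4
    · exact key s ⟨h1, h2⟩
end
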